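/- arXiv:0709.2099 — 3 statements merged into one kernel-verified Lean document; each statement's English description precedes it below -/
import Mathlib

section
/- Let P be a simple d-polytope in E^d (d ≥ 2) with m facets, and let p_0, p_1, …, p_{d−1} be the polynomials from the explicit representation of P (p_i(x) = σ_{m−d+i+1}(q_1(x),…,q_m(x)) for 1 ≤ i ≤ d−1, and p_0(x) = 1 − Σ_{v ∈ vert(P)} y_v ((1/d) Σ_{j : q_j(v)=0}(1 − q_j(x))^{2k})^{2k} with suitable k ∈ ℕ and y_v > 0, such that P = {x : p_i(x) ≥ 0 for all i}). Then the interior of P satisfies int(P) = {x ∈ E^d : p_i(x) > 0 for all 0 ≤ i ≤ d−1}. -/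
noncomputable section

open Metric Set Finset Matrix
open scoped RealInnerProductSpace BigOperators Classical

namespace AverkovHenk

private lemma powfun_conv {ι : Type*} (A : Finset ι) (n : ℕ) (hn : Even n) (c : ℝ) (hc : 0 < c)
    (f g : ι → ℝ) (a b : ℝ) (ha : 0 ≤ a) (hb : 0 ≤ b) (hab : a + b = 1) :
    ((∑ j ∈ A, (a * f j + b * g j) ^ n) / c) ^ n ≤
      a * ((∑ j ∈ A, (f j) ^ n) / c) ^ n + b * ((∑ j ∈ A, (g j) ^ n) / c) ^ n := by
  have hpc := (Even.convexOn_pow (𝕜 := ℝ) hn).2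
  have hSmid : (∑ j ∈ A, (a * f j + b * g j) ^ n) ≤
      a * (∑ j ∈ A, (f j) ^ n) + b * (∑ j ∈ A, (g j) ^ n) := by
    rw [Finset.mul_sum, Finset.mul_sum, ← Finset.sum_add_distrib]
    refine Finset.sum_le_sum fun j _ => ?_
    simpa [smul_eq_mul] using hpc (Set.mem_univ (f j)) (Set.mem_univ (g j)) ha hb hab
  have hSnn : 0 ≤ ∑ j ∈ A, (a * f j + b * g j) ^ n :=
    Finset.sum_nonneg fun j _ => hn.pow_nonneg _
  calc ((∑ j ∈ A, (a * f j + b * g j) ^ n) / c) ^ n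
      ≤ ((a * (∑ j ∈ A, (f j) ^ n) + b * (∑ j ∈ A, (g j) ^ n)) / c) ^ n := by
        refine pow_le_pow_left₀ (div_nonneg hSnn hc.le) ?_ n
        exact div_le_div_of_nonneg_right hSmid hc.le |>.trans_eq rfl
    _ = (a * ((∑ j ∈ A, (f j) ^ n) / c) + b * ((∑ j ∈ A, (g j) ^ n) / c)) ^ n := by ring
    _ ≤ a * ((∑ j ∈ A, (f j) ^ n) / c) ^ n + b * ((∑ j ∈ A, (g j) ^ n) / c) ^ n := by
        simpa [smul_eq_mul] using hpc (Set.mem_univ ((∑ j ∈ A, (f j) ^ n) / c))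
          (Set.mem_univ ((∑ j ∈ A, (g j) ^ n) / c)) ha hb hab

private lemma powfun_strict {ι : Type*} (A : Finset ι) (hA : A.Nonempty) (n : ℕ) (hn : Even n)
    (hn0 : n ≠ 0) (c : ℝ) (hc : 0 < c) (f g : ι → ℝ) (hfg : ∀ j ∈ A, f j ≠ g j) :
    ((∑ j ∈ A, ((f j + g j) / 2) ^ n) / c) ^ n <
      (((∑ j ∈ A, (f j) ^ n) / c) ^ n + ((∑ j ∈ A, (g j) ^ n) / c) ^ n) / 2 := by
  have hpc := (Even.convexOn_pow (𝕜 := ℝ) hn).2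
  have hps := (Even.strictConvexOn_pow hn hn0).2
  have hSlt : (∑ j ∈ A, ((f j + g j) / 2) ^ n) <
      ((∑ j ∈ A, (f j) ^ n) + (∑ j ∈ A, (g j) ^ n)) / 2 := by
    rw [← Finset.sum_add_distrib, Finset.sum_div]
    refine Finset.sum_lt_sum_of_nonempty hA fun j hj => ?_
    have := hps (Set.mem_univ (f j)) (Set.mem_univ (g j)) (hfg j hj)
      (by norm_num : (0:ℝ) < 1/2) (by norm_num : (0:ℝ) < 1/2) (by norm_num)
    simp only [smul_eq_mul] at this
    calc ((f j + g j) / 2) ^ n = (1/2 * f j + 1/2 * g j) ^ n := by ring_nf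
      _ < 1/2 * f j ^ n + 1/2 * g j ^ n := this
      _ = (f j ^ n + g j ^ n) / 2 := by ring
  have hSnn : 0 ≤ ∑ j ∈ A, ((f j + g j) / 2) ^ n :=
    Finset.sum_nonneg fun j _ => hn.pow_nonneg _
  calc ((∑ j ∈ A, ((f j + g j) / 2) ^ n) / c) ^ n
      < ((((∑ j ∈ A, (f j) ^ n) + (∑ j ∈ A, (g j) ^ n)) / 2) / c) ^ n := by
        refine pow_lt_pow_left₀ ?_ (div_nonneg hSnn hc.le) hn0
        exact (div_lt_div_iff_of_pos_right hc).mpr hSlt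
    _ = (1/2 * ((∑ j ∈ A, (f j) ^ n) / c) + 1/2 * ((∑ j ∈ A, (g j) ^ n) / c)) ^ n := by ring
    _ ≤ 1/2 * ((∑ j ∈ A, (f j) ^ n) / c) ^ n + 1/2 * ((∑ j ∈ A, (g j) ^ n) / c) ^ n := by
        simpa [smul_eq_mul] using hpc (Set.mem_univ ((∑ j ∈ A, (f j) ^ n) / c))
          (Set.mem_univ ((∑ j ∈ A, (g j) ^ n) / c)) (by norm_num : (0:ℝ) ≤ 1/2)
          (by norm_num : (0:ℝ) ≤ 1/2) (by norm_num)
    _ = _ := by ring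


abbrev E (d : ℕ) := EuclideanSpace ℝ (Fin d)

/-- Support function `h(P,u)` of `P` in direction `u`. -/
def supp {d : ℕ} (P : Set (E d)) (u : E d) : ℝ :=
  sSup ((fun x => ⟪u, x⟫) '' P)

/-- The normalized affine function `q_F` of the facet with outward unit normal `u`. -/
def qf {d : ℕ} (P : Set (E d)) (u : E d) (x : E d) : ℝ :=
  (supp P u - ⟪u, x⟫) / Metric.diam P

/-- The exposed face of `P` in direction `u`. -/
def faceOf {d : ℕ} (P : Set (E d)) (u : E d) : Set (E d) :=
  {x ∈ P | ⟪u, x⟫ = supp P u}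

/-- `u` is an outward unit normal of a facet (a `(d-1)`-dimensional face) of `P`. -/
def IsFacetNormal {d : ℕ} (P : Set (E d)) (u : E d) : Prop :=
  ‖u‖ = 1 ∧ Module.finrank ℝ ↥(vectorSpan ℝ (faceOf P u)) = d - 1

/-- The vertices of `P`, i.e. its extreme points. -/
def vertices {d : ℕ} (P : Set (E d)) : Set (E d) := Set.extremePoints ℝ P

/-- The `l`-th elementary symmetric function of `y_1, …, y_m`. -/
def esymm {m : ℕ} (y : Fin m → ℝ) (l : ℕ) : ℝ :=
  ∑ J ∈ Finset.powersetCard l (Finset.univ : Finset (Fin m)), ∏ j ∈ J, y j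

/-- A presentation of a convex `d`-polytope `P ⊆ E^d` by the `m` outward unit normals
`u 0, …, u (m-1)` of its facets, together with the induced representation
`P = {x | q_j(x) ≥ 0 for all j}`. -/
structure FacetRep (d m : ℕ) where
  P : Set (E d)
  u : Fin m → E d
  convex : Convex ℝ P
  compact : IsCompact P
  fulldim : (interior P).Nonempty
  inj : Function.Injective u
  facet : ∀ j, IsFacetNormal P (u j)
  complete : ∀ w : E d, IsFacetNormal P w → ∃ j, w = u j
  rep : P = {x | ∀ j, 0 ≤ qf P (u j) x}

namespace FacetRep

variable {d m : ℕ}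

/-- The vector `q(x) = (q_1(x), …, q_m(x))`. -/
def q (R : FacetRep d m) (x : E d) : Fin m → ℝ := fun j => qf R.P (R.u j) x

/-- The indices of the facets containing the point `v`. -/
def act (R : FacetRep d m) (v : E d) : Finset (Fin m) :=
  Finset.univ.filter fun j => R.q v j = 0

/-- The polytope is simple: each vertex lies on exactly `d` facets. -/
def Simple (R : FacetRep d m) : Prop :=
  ∀ v ∈ vertices R.P, (R.act v).card = d

/-- The enlarged polytope `P_ε`. -/
def Peps (R : FacetRep d m) (ε : ℝ) : Set (E d) := {x | ∀ j, -ε ≤ R.q x j}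

/-- The box `Π_{v,ε} = {x : |q_v(x)|_∞ ≤ ε}`. -/
def Piv (R : FacetRep d m) (v : E d) (ε : ℝ) : Set (E d) :=
  {x | ∀ j ∈ R.act v, |R.q x j| ≤ ε}

/-- The cone `C_v = {x : -σ_1(q_v(x)) ≥ (2/3)|q_v(x)|}` (Euclidean norm). -/
def Cv (R : FacetRep d m) (v : E d) : Set (E d) :=
  {x | (2/3) * Real.sqrt (∑ j ∈ R.act v, (R.q x j)^2) ≤ -(∑ j ∈ R.act v, R.q x j)}

/-- The polytope `P^v_{ε,δ}`. -/
def Pv (R : FacetRep d m) (v : E d) (ε δ : ℝ) : Set (E d) :=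
  {x | (∀ j ∈ R.act v, -ε ≤ R.q x j) ∧ ∀ j ∉ R.act v, δ ≤ R.q x j}

/-- `γ = max{1 - q_F(v) : F a facet, v a vertex not on F}`. -/
def gam (R : FacetRep d m) : ℝ :=
  sSup {c | ∃ v ∈ vertices R.P, ∃ j, R.q v j ≠ 0 ∧ c = 1 - R.q v j}

/-- The polynomial `f_k` built from weights `y_v` over the vertex set `V`. -/
def fk (R : FacetRep d m) (V : Finset (E d)) (y : ↥V → ℝ) (k : ℕ) (x : E d) : ℝ :=
  ∑ v : ↥V, y v * ((∑ j ∈ R.act v.1, (1 - R.q x j)^(2*k)) / (R.act v.1).card)^(2*k)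

/-- The matrix `A_k` indexed by the vertex set `V`. -/
def Ak (R : FacetRep d m) (V : Finset (E d)) (k : ℕ) : Matrix ↥V ↥V ℝ :=
  Matrix.of fun w v : ↥V => ((∑ j ∈ R.act v.1, (1 - R.q w.1 j)^(2*k)) / (R.act v.1).card)^(2*k)

/-- `deg(P)`: the maximal number of facets through a vertex. -/
def degP (R : FacetRep d m) (V : Finset (E d)) : ℕ := V.sup fun v => (R.act v).card

end FacetRep

/-- `|U_s^{-1}|_2` where `U_s` is the matrix with rows `u_j^T`, `j ∈ s`: the supremum of `‖x‖`
over the set where the Euclidean norm of `U_s x` is at most `1`. -/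
def invNormU {d m : ℕ} (u : Fin m → E d) (s : Finset (Fin m)) : ℝ :=
  sSup {c | ∃ x : E d, Real.sqrt (∑ j ∈ s, (⟪u j, x⟫)^2) ≤ 1 ∧ c = ‖x‖}

/-- `α = max_{v ∈ vert(P)} |U_v^{-1}|_2`. -/
def alpha {d m : ℕ} (R : FacetRep d m) (V : Finset (E d)) : ℝ :=
  sSup {a | ∃ v ∈ V, a = invNormU R.u (R.act v)}

/-- The normal cone `N(Q,x) = {u : ⟨x,u⟩ = h(Q,u)}`. -/
def normalCone {d : ℕ} (Q : Set (E d)) (x : E d) : Set (E d) :=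
  {u | ⟪u, x⟫ = supp Q u}

/-- `S` is an edge (a 1-dimensional face) of `P`. -/
def IsEdgeOf {d : ℕ} (P S : Set (E d)) : Prop :=
  IsExposed ℝ P S ∧ Module.finrank ℝ ↥(vectorSpan ℝ S) = 1

set_option maxHeartbeats 1000000 in
theorem statement2 (d m : ℕ) (hd : 2 ≤ d) (R : FacetRep d m) (hs : R.Simple)
    (V : Finset (E d)) (hV : (↑V : Set (E d)) = vertices R.P)
    (k : ℕ) (y : E d → ℝ) (hy : ∀ v ∈ V, 0 < y v)
    (p0 : E d → ℝ)
    (hp0 : p0 = fun x =>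
      1 - ∑ v ∈ V, y v * ((∑ j ∈ R.act v, (1 - R.q x j) ^ (2 * k)) / d) ^ (2 * k))
    (hrep : R.P = {x : E d |
        0 ≤ p0 x ∧ ∀ i, 1 ≤ i → i ≤ d - 1 → 0 ≤ esymm (R.q x) (m - d + i + 1)}) :
    interior R.P = {x : E d |
        0 < p0 x ∧ ∀ i, 1 ≤ i → i ≤ d - 1 → 0 < esymm (R.q x) (m - d + i + 1)} := by
  -- continuity of the coordinate functions
  have hdpos : (0:ℝ) < (d:ℝ) := by exact_mod_cast (by omega : 0 < d)
  have hqcont : ∀ j, Continuous fun x : E d => R.q x j := by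
    intro j
    simp only [FacetRep.q, qf]
    exact (continuous_const.sub (continuous_const.inner continuous_id)).div_const _
  have hp0cont : Continuous p0 := by
    rw [hp0]
    refine continuous_const.sub (continuous_finset_sum _ fun v _ => continuous_const.mul ?_)
    exact (((continuous_finset_sum _ fun j _ =>
      (continuous_const.sub (hqcont j)).pow _)).div_const _).pow _
  have hescont : ∀ l, Continuous fun x : E d => esymm (R.q x) l := by
    intro l
    simp only [esymm]
    exact continuous_finset_sum _ fun J _ => continuous_finset_prod _ fun j _ => hqcont j
  apply Set.Subset.antisymm
  · -- interior ⊆ strict set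
    intro x hx
    have hxP : x ∈ R.P := interior_subset hx
    have hPne : R.P.Nonempty := ⟨x, hxP⟩
    have hbd := R.compact.isBounded
    obtain ⟨r, hr, hball⟩ := Metric.isOpen_iff.1 isOpen_interior x hx
    have hballP : Metric.ball x r ⊆ R.P := hball.trans interior_subset
    -- positive diameter
    have hdiam : 0 < Metric.diam R.P := by
      set w0 : E d := EuclideanSpace.single (⟨0, by omega⟩ : Fin d) (1:ℝ) with hw0def
      have hw0 : ‖w0‖ = 1 := by simp [hw0def]
      have h1 : x + (r/2) • w0 ∈ R.P := by
        apply hballP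
        rw [Metric.mem_ball, dist_self_add_left, norm_smul, hw0]
        rw [Real.norm_eq_abs, abs_of_pos (by linarith)]
        linarith
      have h2 := Metric.dist_le_diam_of_mem hbd h1 hxP
      rw [dist_self_add_left, norm_smul, hw0, Real.norm_eq_abs, abs_of_pos (by linarith)] at h2
      linarith
    -- q is positive at interior points
    have hq : ∀ j, 0 < R.q x j := by
      intro j
      have hu : ‖R.u j‖ = 1 := (R.facet j).1
      have hmem : x + (r/2) • R.u j ∈ R.P := by
        apply hballP
        rw [Metric.mem_ball, dist_self_add_left, norm_smul, hu]
        rw [Real.norm_eq_abs, abs_of_pos (by linarith)]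
        linarith
      have hbdd : BddAbove ((fun y => ⟪R.u j, y⟫) '' R.P) :=
        (R.compact.image (continuous_const.inner continuous_id)).bddAbove
      have hle : ⟪R.u j, x + (r/2) • R.u j⟫ ≤ supp R.P (R.u j) :=
        le_csSup hbdd ⟨_, hmem, rfl⟩
      have hinner : ⟪R.u j, x + (r/2) • R.u j⟫ = ⟪R.u j, x⟫ + r/2 := by
        rw [inner_add_right, real_inner_smul_right, real_inner_self_eq_norm_sq, hu]
        ring
      rw [hinner] at hle
      show 0 < qf R.P (R.u j) x
      rw [qf]
      apply div_pos _ hdiam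
      linarith
    -- a vertex
    have hVne : V.Nonempty := by
      obtain ⟨v, hv⟩ := R.compact.extremePoints_nonempty hPne
      have : v ∈ (↑V : Set (E d)) := by rw [hV]; exact hv
      exact ⟨v, by exact_mod_cast this⟩
    obtain ⟨v, hvV⟩ := hVne
    have hvvert : v ∈ vertices R.P := by rw [← hV]; exact_mod_cast hvV
    have hvP : v ∈ R.P := extremePoints_subset hvvert
    have hcard : (R.act v).card = d := hs v hvvert
    have hdm : d ≤ m := by
      have := Finset.card_le_univ (R.act v)
      simpa [hcard] using this
    have hactq : ∀ j ∈ R.act v, R.q v j = 0 := fun j hj => (Finset.mem_filter.1 hj).2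
    have hactne : (R.act v).Nonempty := by
      rw [← Finset.card_pos, hcard]; omega
    -- esymm part
    have hesymm : ∀ i, 1 ≤ i → i ≤ d - 1 → 0 < esymm (R.q x) (m - d + i + 1) := by
      intro i h1 h2
      rw [esymm]
      apply Finset.sum_pos
      · intro J _
        exact Finset.prod_pos fun j _ => hq j
      · apply Finset.powersetCard_nonempty.2
        simp only [Finset.card_univ, Fintype.card_fin]
        omega
    refine ⟨?_, hesymm⟩
    -- p0 part
    by_contra hpos
    have hxmem : (0 ≤ p0 x ∧ ∀ i, 1 ≤ i → i ≤ d - 1 →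
        0 ≤ esymm (R.q x) (m - d + i + 1)) := by rw [hrep] at hxP; exact hxP
    have hp0x : p0 x = 0 := le_antisymm (not_lt.1 hpos) hxmem.1
    -- q is affine
    have hqaff : ∀ (a b : ℝ) (z₁ z₂ : E d) (j : Fin m), a + b = 1 →
        R.q (a • z₁ + b • z₂) j = a * R.q z₁ j + b * R.q z₂ j := by
      intro a b z₁ z₂ j hab
      simp only [FacetRep.q, qf]
      rw [inner_add_right, real_inner_smul_right, real_inner_smul_right]
      have hnum : supp R.P (R.u j) - (a * ⟪R.u j, z₁⟫ + b * ⟪R.u j, z₂⟫) =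
          a * (supp R.P (R.u j) - ⟪R.u j, z₁⟫) + b * (supp R.P (R.u j) - ⟪R.u j, z₂⟫) := by
        linear_combination (- supp R.P (R.u j)) * hab
      rw [hnum, add_div, mul_div_assoc, mul_div_assoc]
    rcases Nat.eq_zero_or_pos k with hk0 | hk
    · -- k = 0 : p0 is constant; build an unbounded line inside P
      subst hk0
      have hp0' : ∀ z : E d, p0 z = 1 - ∑ v' ∈ V, y v' := by
        intro z; rw [hp0]; simp
      obtain ⟨J, hJsub, hJcard⟩ := Finset.exists_subset_card_eq (s := R.act v) (n := d-1) (by omega)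
      set W : Submodule ℝ (E d) := Submodule.span ℝ (↑(J.image R.u) : Set (E d)) with hWdef
      have hWne : W ≠ ⊤ := by
        intro htop
        have h1 : Module.finrank ℝ W ≤ (J.image R.u).card :=
          finrank_span_finset_le_card (J.image R.u)
        have h2 : (J.image R.u).card ≤ d - 1 := le_trans (Finset.card_image_le) (le_of_eq hJcard)
        have h3 : Module.finrank ℝ W = d := by
          rw [htop, finrank_top, finrank_euclideanSpace, Fintype.card_fin]
        omega
      have hWorth : Wᗮ ≠ ⊥ := fun h => hWne (Submodule.orthogonal_eq_bot_iff.1 h)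
      obtain ⟨w, hwW, hwne⟩ := Submodule.exists_mem_ne_zero_of_ne_bot hWorth
      have hworth : ∀ j ∈ J, ⟪R.u j, w⟫ = 0 := by
        intro j hj
        refine (Submodule.mem_orthogonal W w).1 hwW _ (Submodule.subset_span ?_)
        simp only [Finset.coe_image, Set.mem_image, Finset.mem_coe]
        exact ⟨j, hj, rfl⟩
      have hline : ∀ t : ℝ, v + t • w ∈ R.P := by
        intro t
        have hqconst : ∀ j ∈ J, R.q (v + t • w) j = 0 := by
          intro j hj
          have : ⟪R.u j, v + t • w⟫ = ⟪R.u j, v⟫ := by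
            rw [inner_add_right, real_inner_smul_right, hworth j hj, mul_zero, add_zero]
          have heq : R.q (v + t • w) j = R.q v j := by
            simp only [FacetRep.q, qf, this]
          rw [heq]
          exact hactq j (hJsub hj)
        rw [hrep]
        constructor
        · rw [hp0']
          have := hp0' x
          rw [hp0x] at this
          linarith
        · intro i h1 h2
          rw [esymm]
          apply Finset.sum_nonneg
          intro K hK
          have hKcard : K.card = m - d + i + 1 := (Finset.mem_powersetCard.1 hK).2
          have hinter : (K ∩ J).Nonempty := by
            rw [← Finset.card_pos]
            have hU : (K ∪ J).card ≤ m := by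
              have := Finset.card_le_univ (K ∪ J)
              simpa using this
            have := Finset.card_inter_add_card_union K J
            omega
          obtain ⟨j, hj⟩ := hinter
          rw [Finset.mem_inter] at hj
          exact le_of_eq (Finset.prod_eq_zero hj.1 (hqconst j hj.2)).symm
      obtain ⟨C, hC⟩ := isBounded_iff_forall_norm_le.1 hbd
      have hwpos : 0 < ‖w‖ := norm_pos_iff.2 hwne
      set t : ℝ := (C + ‖v‖ + 1) / ‖w‖ with htdef
      have h1 : ‖v + t • w‖ ≤ C := hC _ (hline t)
      have hCv : ‖v‖ ≤ C := hC v hvP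
      have htpos : 0 < t := div_pos (by linarith [norm_nonneg v]) hwpos
      have h2 : ‖t • w‖ ≤ ‖v + t • w‖ + ‖v‖ := by
        calc ‖t • w‖ = ‖(v + t • w) - v‖ := by rw [add_sub_cancel_left]
          _ ≤ ‖v + t • w‖ + ‖v‖ := norm_sub_le _ _
      have h3 : ‖t • w‖ = C + ‖v‖ + 1 := by
        rw [norm_smul, Real.norm_eq_abs, abs_of_pos htpos, htdef]
        field_simp
      linarith
    · -- k ≥ 1
      have h2k : 2 * k ≠ 0 := by omega
      have h2keven : Even (2 * k) := even_two_mul k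
      set g : E d → E d → ℝ := fun w z =>
        ((∑ j ∈ R.act w, (1 - R.q z j) ^ (2*k)) / (d:ℝ)) ^ (2*k) with hgdef
      set T : E d → ℝ := fun z => ∑ w ∈ V, y w * g w z with hTdef
      have hp0T : ∀ z, p0 z = 1 - T z := by intro z; rw [hp0]
      have hTle : ∀ z ∈ R.P, T z ≤ 1 := by
        intro z hz
        rw [hrep] at hz
        have := hz.1
        rw [hp0T] at this
        linarith
      have hTx : T x = 1 := by
        have := hp0T x
        rw [hp0x] at this
        linarith
      -- convexity of g w
      have hconv : ∀ (wv : E d) (a b : ℝ) (z₁ z₂ : E d), 0 ≤ a → 0 ≤ b → a + b = 1 →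
          g wv (a • z₁ + b • z₂) ≤ a * g wv z₁ + b * g wv z₂ := by
        intro wv a b z₁ z₂ ha hb hab
        have key := powfun_conv (R.act wv) (2*k) h2keven (d:ℝ) hdpos
          (fun j => 1 - R.q z₁ j) (fun j => 1 - R.q z₂ j) a b ha hb hab
        simp only [hgdef]
        have hrw : ∀ j ∈ R.act wv, (1 - R.q (a • z₁ + b • z₂) j) ^ (2*k) =
            (a * (1 - R.q z₁ j) + b * (1 - R.q z₂ j)) ^ (2*k) := by
          intro j _
          rw [hqaff a b z₁ z₂ j hab]
          congr 1
          linear_combination -hab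
        rw [Finset.sum_congr rfl hrw]
        exact key
      have hTconv : ∀ (a b : ℝ) (z₁ z₂ : E d), 0 ≤ a → 0 ≤ b → a + b = 1 →
          T (a • z₁ + b • z₂) ≤ a * T z₁ + b * T z₂ := by
        intro a b z₁ z₂ ha hb hab
        simp only [hTdef]
        rw [Finset.mul_sum, Finset.mul_sum, ← Finset.sum_add_distrib]
        refine Finset.sum_le_sum fun w hw => ?_
        have h := hconv w a b z₁ z₂ ha hb hab
        have hyw := (hy w hw).le
        calc y w * g w (a • z₁ + b • z₂) ≤ y w * (a * g w z₁ + b * g w z₂) :=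
              mul_le_mul_of_nonneg_left h hyw
          _ = a * (y w * g w z₁) + b * (y w * g w z₂) := by ring
      -- x is not the vertex v
      have hxv : x ≠ v := by
        intro h
        obtain ⟨j0, hj0⟩ := hactne
        have h1 := hactq j0 hj0
        have h2 := hq j0
        rw [h, h1] at h2
        exact lt_irrefl _ h2
      have hxvpos : 0 < ‖x - v‖ := by
        rw [norm_pos_iff, sub_ne_zero]; exact hxv
      set s : ℝ := r / (2 * ‖x - v‖) with hsdef
      have hspos : 0 < s := by positivity
      set x' : E d := x + s • (x - v) with hx'def
      have hx'P : x' ∈ R.P := by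
        apply hballP
        rw [Metric.mem_ball, hx'def, dist_self_add_left, norm_smul, Real.norm_eq_abs,
          abs_of_pos hspos, hsdef]
        have hh : r / (2 * ‖x - v‖) * ‖x - v‖ = r / 2 := by
          field_simp
        rw [hh]
        linarith
      have h1s : (0:ℝ) < 1 + s := by linarith
      have h12s : (0:ℝ) < 1 + 2*s := by linarith
      -- T v = 1
      have hid1 : (1/(1+s)) • x' + (s/(1+s)) • v = x := by
        rw [hx'def]
        match_scalars <;> field_simp <;> ring
      have hTv : T v = 1 := by
        refine le_antisymm (hTle v hvP) ?_
        have h := hTconv (1/(1+s)) (s/(1+s)) x' v (by positivity) (by positivity)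
          (by field_simp)
        rw [hid1, hTx] at h
        have hTx' := hTle x' hx'P
        have hb : 0 < s/(1+s) := by positivity
        have ha : 0 ≤ 1/(1+s) := by positivity
        have hab : 1/(1+s) + s/(1+s) = 1 := by field_simp
        nlinarith [mul_le_mul_of_nonneg_left hTx' ha]
      -- the midpoint
      set μ : E d := (1/2 : ℝ) • v + (1/2 : ℝ) • x with hμdef
      have hμP : μ ∈ R.P := R.convex hvP hxP (by norm_num) (by norm_num) (by norm_num)
      have hid2 : (2*s/(1+2*s)) • μ + (1/(1+2*s)) • x' = x := by
        rw [hμdef, hx'def]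
        match_scalars <;> field_simp <;> ring
      have hTμ : T μ = 1 := by
        refine le_antisymm (hTle μ hμP) ?_
        have h := hTconv (2*s/(1+2*s)) (1/(1+2*s)) μ x' (by positivity) (by positivity)
          (by field_simp; ring)
        rw [hid2, hTx] at h
        have hTx' := hTle x' hx'P
        have ha : 0 < 2*s/(1+2*s) := by positivity
        have hb : 0 ≤ 1/(1+2*s) := by positivity
        have hab : 2*s/(1+2*s) + 1/(1+2*s) = 1 := by field_simp; ring
        nlinarith [mul_le_mul_of_nonneg_left hTx' hb]
      -- strict convexity at v
      have hgv : g v μ < (g v v + g v x) / 2 := by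
        have hqμ : ∀ j ∈ R.act v, (1 - R.q μ j) ^ (2*k) =
            (((1 - R.q v j) + (1 - R.q x j))/2) ^ (2*k) := by
          intro j _
          rw [hμdef, hqaff (1/2) (1/2) v x j (by norm_num)]
          congr 1
          ring
        have key := powfun_strict (R.act v) hactne (2*k) h2keven h2k (d:ℝ) hdpos
          (fun j => 1 - R.q v j) (fun j => 1 - R.q x j)
          (fun j hj => by
            have h1 := hactq j hj
            have h2 := hq j
            simp only [h1, sub_zero, ne_eq]
            intro hcon
            have : R.q x j = 0 := by linarith
            linarith)
        simp only [hgdef]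
        rw [Finset.sum_congr rfl hqμ]
        exact key
      -- the strict inequality and contradiction
      have hstrict : T μ < (T v + T x) / 2 := by
        have hle2 : ∀ w ∈ V, y w * g w μ ≤ y w * ((g w v + g w x)/2) := by
          intro w hw
          have h := hconv w (1/2) (1/2) v x (by norm_num) (by norm_num) (by norm_num)
          rw [← hμdef] at h
          exact mul_le_mul_of_nonneg_left (by linarith) (hy w hw).le
        have hlt : y v * g v μ < y v * ((g v v + g v x)/2) :=
          mul_lt_mul_of_pos_left hgv (hy v hvV)
        have hsum := Finset.sum_lt_sum hle2 ⟨v, hvV, hlt⟩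
        have hrhs : ∑ w ∈ V, y w * ((g w v + g w x)/2) = (T v + T x)/2 := by
          simp only [hTdef]
          rw [← Finset.sum_add_distrib, Finset.sum_div]
          exact Finset.sum_congr rfl fun w _ => by ring
        rw [hrhs] at hsum
        exact hsum
      rw [hTμ, hTv, hTx] at hstrict
      norm_num at hstrict
  · -- strict set ⊆ interior
    have hopen : IsOpen {x : E d | 0 < p0 x ∧ ∀ i, 1 ≤ i → i ≤ d - 1 →
        0 < esymm (R.q x) (m - d + i + 1)} := by
      have heq : {x : E d | 0 < p0 x ∧ ∀ i, 1 ≤ i → i ≤ d - 1 →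
          0 < esymm (R.q x) (m - d + i + 1)} =
          {x : E d | 0 < p0 x} ∩ ⋂ i ∈ Finset.Icc 1 (d-1),
            {x : E d | 0 < esymm (R.q x) (m - d + i + 1)} := by
        ext z
        simp only [Set.mem_setOf_eq, Set.mem_inter_iff, Set.mem_iInter, Finset.mem_Icc]
        constructor
        · rintro ⟨h1, h2⟩
          exact ⟨h1, fun i hi => h2 i hi.1 hi.2⟩
        · rintro ⟨h1, h2⟩
          exact ⟨h1, fun i hi1 hi2 => h2 i ⟨hi1, hi2⟩⟩
      rw [heq]
      exact (isOpen_lt continuous_const hp0cont).inter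
        (isOpen_biInter_finset fun i _ => isOpen_lt continuous_const (hescont _))
    have hsub : {x : E d | 0 < p0 x ∧ ∀ i, 1 ≤ i → i ≤ d - 1 →
        0 < esymm (R.q x) (m - d + i + 1)} ⊆ R.P := by
      intro z hz
      rw [hrep]
      exact ⟨hz.1.le, fun i h1 h2 => (hz.2 i h1 h2).le⟩
    exact interior_maximal hsub hopen


end AverkovHenk
end
end

section
/- Let P be a simple d-polytope in E^d with m facets. Then there exists ε_1 > 0 such that σ_i(q(x)) > 0 for every 1 ≤ i ≤ m − d and every x ∈ P_{ε_1}. -/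
noncomputable section

open Metric Set Finset Matrix
open scoped RealInnerProductSpace BigOperators Classical

namespace AverkovHenk

section Aux

variable {d m : ℕ}

lemma inner_le_supp {P : Set (E d)} (hP : IsCompact P) (u : E d) {x : E d}
    (hx : x ∈ P) : ⟪u, x⟫ ≤ supp P u := by
  refine le_csSup ?_ ⟨x, hx, rfl⟩
  exact (hP.image (continuous_const.inner continuous_id)).bddAbove

lemma qf_combo (P : Set (E d)) (u : E d) (x y : E d) (t : ℝ) :
    qf P u ((1 - t) • x + t • y) = (1 - t) * qf P u x + t * qf P u y := by
  unfold qf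
  rw [inner_add_right, real_inner_smul_right, real_inner_smul_right]
  ring

lemma diam_pos (R : FacetRep d m) (hd : 2 ≤ d) : 0 < Metric.diam R.P := by
  obtain ⟨x₀, hx₀⟩ := R.fulldim
  obtain ⟨ρ, hρ, hball⟩ := Metric.mem_nhds_iff.1 (mem_interior_iff_mem_nhds.1 hx₀)
  have hx₀P : x₀ ∈ R.P := hball (Metric.mem_ball_self hρ)
  haveI : NeZero d := ⟨by omega⟩
  set e : E d := EuclideanSpace.single (0 : Fin d) (1 : ℝ) with he
  have hne : ‖e‖ = 1 := by simp [he, EuclideanSpace.norm_single]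
  have hy : x₀ + (ρ / 2) • e ∈ R.P := by
    apply hball
    simp only [Metric.mem_ball, dist_self_add_left]
    rw [norm_smul, hne]
    simp only [mul_one, Real.norm_eq_abs, abs_of_pos (by linarith : (0:ℝ) < ρ / 2)]
    linarith
  have hdist : dist x₀ (x₀ + (ρ / 2) • e) = ρ / 2 := by
    rw [dist_self_add_right, norm_smul, hne]
    simp [abs_of_pos hρ]
  have := Metric.dist_le_diam_of_mem R.compact.isBounded hx₀P hy
  rw [hdist] at this; linarith

lemma q_nonneg_of_mem (R : FacetRep d m) {x : E d} (hx : x ∈ R.P) (j : Fin m) :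
    0 ≤ R.q x j := by
  have := R.rep ▸ hx
  exact this j

/-- In a simple polytope, every point of `P` lies on at most `d` facets. -/
lemma act_card_le (R : FacetRep d m) (hd : 2 ≤ d) (hs : R.Simple) {x : E d}
    (hx : x ∈ R.P) : (R.act x).card ≤ d := by
  have hD : (0 : ℝ) < Metric.diam R.P := diam_pos R hd
  set J := R.act x with hJ
  set F : Set (E d) :=
    R.P ∩ ⋂ j ∈ J, {y | ⟪R.u j, y⟫ = supp R.P (R.u j)} with hF
  have hmemF : ∀ {y : E d}, y ∈ F ↔ y ∈ R.P ∧ ∀ j ∈ J, ⟪R.u j, y⟫ = supp R.P (R.u j) := by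
    intro y; simp [hF, Set.mem_iInter₂]
  have hxF : x ∈ F := by
    rw [hmemF]
    refine ⟨hx, fun j hj => ?_⟩
    have hq : R.q x j = 0 := (Finset.mem_filter.1 hj).2
    have hq' : (supp R.P (R.u j) - ⟪R.u j, x⟫) / Metric.diam R.P = 0 := hq
    rcases div_eq_zero_iff.1 hq' with h | h
    · linarith
    · exact absurd h (ne_of_gt hD)
  have hclosed : IsClosed F := by
    refine R.compact.isClosed.inter (isClosed_biInter fun j _ => ?_)
    exact isClosed_eq (continuous_const.inner continuous_id) continuous_const
  have hcompF : IsCompact F := R.compact.inter_right (by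
    exact isClosed_biInter fun j _ =>
      isClosed_eq (continuous_const.inner continuous_id) continuous_const)
  have hext : IsExtreme ℝ R.P F := by
    constructor
    · exact Set.inter_subset_left
    · rintro x₁ hx₁ x₂ hx₂ z hzF hzseg
      obtain ⟨a, b, ha, hb, hab, rfl⟩ := hzseg
      rw [hmemF] at hzF
      have key : ∀ j ∈ J, ⟪R.u j, x₁⟫ = supp R.P (R.u j) ∧
          ⟪R.u j, x₂⟫ = supp R.P (R.u j) := by
        intro j hj
        have h1 : ⟪R.u j, x₁⟫ ≤ supp R.P (R.u j) := inner_le_supp R.compact _ hx₁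
        have h2 : ⟪R.u j, x₂⟫ ≤ supp R.P (R.u j) := inner_le_supp R.compact _ hx₂
        have heq : a * ⟪R.u j, x₁⟫ + b * ⟪R.u j, x₂⟫ = supp R.P (R.u j) := by
          have := hzF.2 j hj
          rwa [inner_add_right, real_inner_smul_right, real_inner_smul_right] at this
        have hb1 : b * ⟪R.u j, x₂⟫ ≤ b * supp R.P (R.u j) :=
          mul_le_mul_of_nonneg_left h2 hb.le
        have ha1 : a * ⟪R.u j, x₁⟫ ≤ a * supp R.P (R.u j) :=
          mul_le_mul_of_nonneg_left h1 ha.le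
        have habs : a * supp R.P (R.u j) + b * supp R.P (R.u j) = supp R.P (R.u j) := by
          rw [← add_mul, hab, one_mul]
        have hac : a * ⟪R.u j, x₁⟫ = a * supp R.P (R.u j) := by linarith
        have hbc : b * ⟪R.u j, x₂⟫ = b * supp R.P (R.u j) := by linarith
        exact ⟨mul_left_cancel₀ (ne_of_gt ha) hac, mul_left_cancel₀ (ne_of_gt hb) hbc⟩
      rw [hmemF]
      exact ⟨hx₁, fun j hj => (key j hj).1⟩
  obtain ⟨v, hv⟩ := hcompF.extremePoints_nonempty ⟨x, hxF⟩
  have hvP : v ∈ vertices R.P := hext.extremePoints_subset_extremePoints hv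
  have hvF : v ∈ F := hv.1
  rw [hmemF] at hvF
  have hsub : J ⊆ R.act v := by
    intro j hj
    rw [FacetRep.act, Finset.mem_filter]
    refine ⟨Finset.mem_univ _, ?_⟩
    unfold FacetRep.q qf
    rw [hvF.2 j hj]
    simp
  calc J.card ≤ (R.act v).card := Finset.card_le_card hsub
    _ = d := hs v hvP

lemma esymm_pos_of_mem (R : FacetRep d m) (hd : 2 ≤ d) (hs : R.Simple) {x : E d}
    (hx : x ∈ R.P) {i : ℕ} (hi1 : 1 ≤ i) (hi2 : i ≤ m - d) : 0 < esymm (R.q x) i := by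
  have hq0 : ∀ j, 0 ≤ R.q x j := q_nonneg_of_mem R hx
  set S := Finset.univ.filter fun j : Fin m => 0 < R.q x j with hS
  have hcard : (R.act x).card + S.card = m := by
    have := Finset.card_filter_add_card_filter_not
      (s := (Finset.univ : Finset (Fin m))) (p := fun j => R.q x j = 0)
    rw [Finset.card_univ, Fintype.card_fin] at this
    have hSeq : Finset.univ.filter (fun j : Fin m => ¬ R.q x j = 0) = S := by
      apply Finset.filter_congr
      intro j _
      constructor
      · intro h; exact lt_of_le_of_ne (hq0 j) (Ne.symm h)
      · intro h; exact ne_of_gt h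
    rw [hSeq] at this
    exact this
  have hact : (R.act x).card ≤ d := act_card_le R hd hs hx
  have hiS : i ≤ S.card := by omega
  obtain ⟨J, hJS, hJcard⟩ := Finset.exists_subset_card_eq hiS
  unfold esymm
  apply Finset.sum_pos'
  · intro K _
    exact Finset.prod_nonneg fun j _ => hq0 j
  · refine ⟨J, ?_, ?_⟩
    · rw [Finset.mem_powersetCard]
      exact ⟨Finset.subset_univ _, hJcard⟩
    · exact Finset.prod_pos fun j hj => (Finset.mem_filter.1 (hJS hj)).2

lemma continuous_esymm_q (R : FacetRep d m) (i : ℕ) :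
    Continuous fun x => esymm (R.q x) i := by
  unfold esymm FacetRep.q qf
  refine continuous_finset_sum _ fun J _ => continuous_finset_prod _ fun j _ => ?_
  exact (continuous_const.sub (continuous_const.inner continuous_id)).div_const _

end Aux

theorem statement4 (d m : ℕ) (hd : 2 ≤ d) (R : FacetRep d m) (hs : R.Simple) :
    ∃ ε₁ > (0 : ℝ), ∀ x ∈ R.Peps ε₁, ∀ i, 1 ≤ i → i ≤ m - d → 0 < esymm (R.q x) i := by
  have hD : (0 : ℝ) < Metric.diam R.P := diam_pos R hd
  -- the open set where all relevant esymm are positive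
  set U : Set (E d) := ⋂ i ∈ Finset.Icc 1 (m - d), {x | 0 < esymm (R.q x) i} with hU
  have hUopen : IsOpen U := by
    refine isOpen_biInter_finset fun i _ => ?_
    exact isOpen_lt continuous_const (continuous_esymm_q R i)
  have hmemU : ∀ {x : E d}, x ∈ U ↔ ∀ i, 1 ≤ i → i ≤ m - d → 0 < esymm (R.q x) i := by
    intro x
    simp only [hU, Set.mem_iInter₂, Finset.mem_Icc, Set.mem_setOf_eq]
    exact ⟨fun h i h1 h2 => h i ⟨h1, h2⟩, fun h i ⟨h1, h2⟩ => h i h1 h2⟩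
  have hPU : R.P ⊆ U := fun x hx => hmemU.2 fun i h1 h2 => esymm_pos_of_mem R hd hs hx h1 h2
  obtain ⟨δ, hδ, hthick⟩ := R.compact.exists_thickening_subset_open hUopen hPU
  -- interior point with a margin
  obtain ⟨x₀, hx₀⟩ := R.fulldim
  obtain ⟨ρ, hρ, hball⟩ := Metric.mem_nhds_iff.1 (mem_interior_iff_mem_nhds.1 hx₀)
  have hx₀P : x₀ ∈ R.P := hball (Metric.mem_ball_self hρ)
  set r : ℝ := ρ / 2 / Metric.diam R.P with hr
  have hrpos : 0 < r := by positivity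
  have hqx₀ : ∀ j, r ≤ R.q x₀ j := by
    intro j
    have hu : ‖R.u j‖ = 1 := (R.facet j).1
    have hyP : x₀ + (ρ / 2) • R.u j ∈ R.P := by
      apply hball
      simp only [Metric.mem_ball, dist_self_add_left]
      rw [norm_smul, hu]
      simp only [mul_one, Real.norm_eq_abs, abs_of_pos (by linarith : (0:ℝ) < ρ / 2)]
      linarith
    have hle : ⟪R.u j, x₀ + (ρ / 2) • R.u j⟫ ≤ supp R.P (R.u j) :=
      inner_le_supp R.compact _ hyP
    rw [inner_add_right, real_inner_smul_right, real_inner_self_eq_norm_sq, hu] at hle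
    have hnum : ρ / 2 ≤ supp R.P (R.u j) - ⟪R.u j, x₀⟫ := by nlinarith
    unfold FacetRep.q qf
    rw [hr]
    exact (div_le_div_iff_of_pos_right hD).mpr hnum
  -- norm bound on P
  obtain ⟨M₀, hM₀⟩ := R.compact.isBounded.exists_norm_le
  set M : ℝ := max M₀ 0 with hM
  have hMnn : 0 ≤ M := le_max_right _ _
  have hMb : ∀ y ∈ R.P, ‖y‖ ≤ M := fun y hy => le_trans (hM₀ y hy) (le_max_left _ _)
  -- choice of ε₁
  refine ⟨min r (r * δ / (4 * M + 1)), by positivity, ?_⟩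
  set ε₁ : ℝ := min r (r * δ / (4 * M + 1)) with hε₁
  intro x hx i hi1 hi2
  have hε₁pos : 0 < ε₁ := by positivity
  have hε₁r : ε₁ ≤ r := min_le_left _ _
  have hε₁δ : ε₁ ≤ r * δ / (4 * M + 1) := min_le_right _ _
  have hεr : 0 < ε₁ + r := by linarith
  set t : ℝ := ε₁ / (ε₁ + r) with ht
  have ht0 : 0 ≤ t := by positivity
  have htmul : t * (ε₁ + r) = ε₁ := div_mul_cancel₀ _ (ne_of_gt hεr)
  have ht2 : t ≤ 1 / 2 := by
    rw [ht, div_le_div_iff₀ hεr (by norm_num)]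
    linarith
  set y : E d := (1 - t) • x + t • x₀ with hy
  have hyP : y ∈ R.P := by
    rw [R.rep]
    intro j
    have hc := qf_combo R.P (R.u j) x x₀ t
    show (0:ℝ) ≤ qf R.P (R.u j) y
    rw [hy, hc]
    have h1 : -ε₁ ≤ qf R.P (R.u j) x := hx j
    have h2 : r ≤ qf R.P (R.u j) x₀ := hqx₀ j
    nlinarith
  -- distance estimate
  have hxx₀ : ‖x - x₀‖ ≤ 4 * M := by
    have hyx₀ : y - x₀ = (1 - t) • (x - x₀) := by
      rw [hy]; module
    have h1 : ‖y - x₀‖ = (1 - t) * ‖x - x₀‖ := by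
      rw [hyx₀, norm_smul, Real.norm_eq_abs, abs_of_nonneg (by linarith)]
    have h2 : ‖y - x₀‖ ≤ 2 * M := by
      calc ‖y - x₀‖ ≤ ‖y‖ + ‖x₀‖ := norm_sub_le _ _
        _ ≤ M + M := add_le_add (hMb y hyP) (hMb x₀ hx₀P)
        _ = 2 * M := by ring
    nlinarith [norm_nonneg (x - x₀)]
  have hdxy : dist x y = t * ‖x - x₀‖ := by
    have : x - y = t • (x - x₀) := by rw [hy]; module
    rw [dist_eq_norm, this, norm_smul, Real.norm_eq_abs, abs_of_nonneg ht0]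
  have hdist : dist x y < δ := by
    have htr : t * r ≤ ε₁ := by nlinarith
    have h4M : 0 < 4 * M + 1 := by linarith
    have key : ε₁ * (4 * M + 1) ≤ r * δ := by
      calc ε₁ * (4 * M + 1) ≤ r * δ / (4 * M + 1) * (4 * M + 1) :=
            mul_le_mul_of_nonneg_right hε₁δ h4M.le
        _ = r * δ := div_mul_cancel₀ _ (ne_of_gt h4M)
    rw [hdxy]
    nlinarith [mul_le_mul_of_nonneg_left hxx₀ ht0, norm_nonneg (x - x₀)]
  have hxU : x ∈ U := hthick (Metric.mem_thickening_iff.2 ⟨y, hyP, hdist⟩)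
  exact hmemU.1 hxU i hi1 hi2

end AverkovHenk
end
end

section
/- Let P be a simple d-polytope in E^d with m facets. Then there exists ε_3 > 0 such that {x ∈ P_{ε_3} : σ_i(q(x)) ≥ 0 for all m−d+2 ≤ i ≤ m} ⊆ P ∪ ⋃_{v ∈ vert(P)} C_v. -/
noncomputable section

open Metric Set Finset Matrix
open scoped RealInnerProductSpace BigOperators Classical

namespace AverkovHenk

open Polynomial

/-- square of a sum in terms of sum of squares and the 2nd elementary symmetric function -/
lemma sq_sum_eq {ι : Type*} [DecidableEq ι] (S : Finset ι) (f : ι → ℝ) :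
    (∑ j ∈ S, f j)^2 = ∑ j ∈ S, (f j)^2
      + 2 * ∑ J ∈ S.powersetCard 2, ∏ j ∈ J, f j := by
  classical
  induction S using Finset.induction_on with
  | empty => simp [show (∅ : Finset ι).powersetCard 2 = ∅ from Finset.powersetCard_eq_empty.mpr (by simp)]
  | insert a s ha ih =>
    have h2 : (insert a s).powersetCard 2 =
        s.powersetCard 2 ∪ (s.powersetCard 1).image (insert a) :=
      Finset.powersetCard_succ_insert ha 1
    have hdisj : Disjoint (s.powersetCard 2) ((s.powersetCard 1).image (insert a)) := by
      rw [Finset.disjoint_left]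
      rintro J hJ hJ'
      obtain ⟨t, ht, rfl⟩ := Finset.mem_image.mp hJ'
      have := (Finset.mem_powersetCard.mp hJ).1
      exact ha (this (Finset.mem_insert_self a t))
    have hinj : Set.InjOn (insert a) ((s.powersetCard 1 : Finset (Finset ι)) : Set (Finset ι)) := by
      intro t ht t' ht' h
      have hat : a ∉ t := fun hc => ha ((Finset.mem_powersetCard.mp ht).1 hc)
      have hat' : a ∉ t' := fun hc => ha ((Finset.mem_powersetCard.mp ht').1 hc)
      have : (insert a t).erase a = (insert a t').erase a := by rw [h]
      rwa [Finset.erase_insert hat, Finset.erase_insert hat'] at this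
    have himg : ∑ J ∈ (s.powersetCard 1).image (insert a), ∏ j ∈ J, f j
        = f a * ∑ j ∈ s, f j := by
      rw [Finset.sum_image hinj]
      have : ∀ t ∈ s.powersetCard 1, ∏ j ∈ insert a t, f j = f a * ∏ j ∈ t, f j := by
        intro t ht
        have hat : a ∉ t := fun hc => ha ((Finset.mem_powersetCard.mp ht).1 hc)
        rw [Finset.prod_insert hat]
      rw [Finset.sum_congr rfl this, ← Finset.mul_sum]
      congr 1
      rw [Finset.powersetCard_one, Finset.sum_map]
      simp
    rw [Finset.sum_insert ha, Finset.sum_insert ha, h2, Finset.sum_union hdisj, himg]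
    ring_nf
    nlinarith [ih]

/-- coefficients of `∏ (X + C (y j))` over all of `Fin m` are the `esymm`s. -/
lemma coeff_prod_eq_esymm {m : ℕ} (y : Fin m → ℝ) {k : ℕ} (hk : k ≤ m) :
    (∏ j : Fin m, (X + C (y j))).coeff k = esymm y (m - k) := by
  rw [Finset.prod_X_add_C_coeff _ _ (by simpa using hk)]
  simp [esymm]

lemma natDegree_prod_X_add_C_le {m : ℕ} (y : Fin m → ℝ) (T : Finset (Fin m)) :
    (∏ j ∈ T, (X + C (y j))).natDegree ≤ T.card := by
  refine le_trans (Polynomial.natDegree_prod_le _ _) ?_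
  simp [Polynomial.natDegree_X_add_C]

/-- Sublemma A : if all elementary symmetric functions are nonnegative then all entries are. -/
lemma all_nonneg_of_esymm_nonneg {m : ℕ} (y : Fin m → ℝ)
    (h : ∀ l, l ≤ m → 0 ≤ esymm y l) : ∀ j, 0 ≤ y j := by
  by_contra hc
  push_neg at hc
  obtain ⟨j₀, hj₀⟩ := hc
  set a : ℝ := -y j₀ with ha
  have ha0 : 0 < a := by simp [ha]; linarith
  set g : Polynomial ℝ := ∏ j : Fin m, (X + C (y j)) with hg
  have heval : g.eval a = 0 := by
    rw [hg, Polynomial.eval_prod]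
    refine Finset.prod_eq_zero (Finset.mem_univ j₀) ?_
    simp [ha]
  have hdeg : g.natDegree < m + 1 := by
    have := natDegree_prod_X_add_C_le y Finset.univ
    simpa using Nat.lt_succ_of_le this
  have heval2 : g.eval a = ∑ k ∈ Finset.range (m+1), g.coeff k * a ^ k :=
    Polynomial.eval_eq_sum_range' hdeg a
  have hterm : ∀ k ∈ Finset.range (m+1), 0 ≤ g.coeff k * a ^ k := by
    intro k hk
    have hk' : k ≤ m := Nat.lt_succ_iff.mp (Finset.mem_range.mp hk)
    have := h (m - k) (Nat.sub_le _ _)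
    rw [hg, coeff_prod_eq_esymm y hk']
    positivity
  have htop : g.coeff m * a ^ m ≤ ∑ k ∈ Finset.range (m+1), g.coeff k * a ^ k :=
    Finset.single_le_sum hterm (Finset.self_mem_range_succ m)
  have hcoeffm : g.coeff m = 1 := by
    rw [hg, coeff_prod_eq_esymm y le_rfl]
    simp [esymm, Finset.powersetCard_zero]
  rw [hcoeffm, one_mul] at htop
  have : (0:ℝ) < a ^ m := pow_pos ha0 m
  rw [← heval2, heval] at htop
  linarith

/-- bound on partial elementary symmetric sums. -/
lemma abs_esymm_sum_le {m : ℕ} (T : Finset (Fin m)) (f : Fin m → ℝ) {c : ℝ}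
    (hc : 0 ≤ c) (hf : ∀ j ∈ T, |f j| ≤ c) (n : ℕ) :
    |∑ J ∈ T.powersetCard n, ∏ j ∈ J, f j| ≤ (2:ℝ)^m * c^n := by
  refine le_trans (Finset.abs_sum_le_sum_abs _ _) ?_
  have hterm : ∀ J ∈ T.powersetCard n, |∏ j ∈ J, f j| ≤ c^n := by
    intro J hJ
    obtain ⟨hJT, hJc⟩ := Finset.mem_powersetCard.mp hJ
    rw [Finset.abs_prod]
    calc ∏ j ∈ J, |f j| ≤ ∏ _j ∈ J, c :=
          Finset.prod_le_prod (fun j _ => abs_nonneg _) (fun j hj => hf j (hJT hj))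
      _ = c ^ J.card := by rw [Finset.prod_const]
      _ = c ^ n := by rw [hJc]
  refine le_trans (Finset.sum_le_sum hterm) ?_
  rw [Finset.sum_const, nsmul_eq_mul]
  have hcard : ((T.powersetCard n).card : ℝ) ≤ (2:ℝ)^m := by
    have h1 : (T.powersetCard n).card ≤ T.powerset.card :=
      Finset.card_le_card (by
        intro J hJ
        exact Finset.mem_powerset.mpr (Finset.mem_powersetCard.mp hJ).1)
    have h2 : T.powerset.card = 2 ^ T.card := Finset.card_powerset T
    have h3 : (2:ℕ) ^ T.card ≤ 2 ^ m := Nat.pow_le_pow_right (by norm_num)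
      (le_trans (Finset.card_le_card (Finset.subset_univ T)) (by simp))
    calc ((T.powersetCard n).card : ℝ) ≤ ((2:ℕ)^m : ℝ) := by
          exact_mod_cast le_trans h1 (h2 ▸ h3)
      _ = (2:ℝ)^m := by push_cast; ring
  exact mul_le_mul_of_nonneg_right hcard (by positivity)

/-- Sublemma B : low elementary symmetric functions are nonnegative for small perturbations. -/
lemma esymm_low_nonneg {m : ℕ} (S : Finset (Fin m)) (y : Fin m → ℝ) (δ M η : ℝ)
    (hδ0 : 0 < δ) (hδ1 : δ ≤ 1) (hM : 1 ≤ M)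
    (hw : ∀ j ∉ S, δ ≤ y j) (hyM : ∀ j, |y j| ≤ M) (hz : ∀ j ∈ S, |y j| ≤ η)
    (hη0 : 0 ≤ η) (hsmall : (2:ℝ)^m * η * M^m ≤ δ^m)
    {l : ℕ} (hl : l ≤ m - S.card) : 0 ≤ esymm y l := by
  classical
  have hlm : l ≤ m := le_trans hl (Nat.sub_le _ _)
  -- a good subset J₀ ⊆ Sᶜ of size l
  have hcompl : l ≤ Sᶜ.card := by
    rw [Finset.card_compl]
    simpa using hl
  obtain ⟨J₀, hJ₀c, hJ₀card⟩ := Finset.exists_subset_card_eq hcompl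
  have hJ₀ : J₀ ∈ (Finset.univ : Finset (Fin m)).powersetCard l :=
    Finset.mem_powersetCard.mpr ⟨Finset.subset_univ _, hJ₀card⟩
  -- each term is at least -η * M^m
  have hlb : ∀ J ∈ (Finset.univ : Finset (Fin m)).powersetCard l,
      -(η * M^m) ≤ ∏ j ∈ J, y j := by
    intro J hJ
    obtain ⟨_, hJcard⟩ := Finset.mem_powersetCard.mp hJ
    by_cases hJS : ∀ j ∈ J, j ∉ S
    · have : (0:ℝ) ≤ ∏ j ∈ J, y j :=
        Finset.prod_nonneg (fun j hj => le_trans (le_of_lt hδ0) (hw j (hJS j hj)))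
      nlinarith [pow_pos (lt_of_lt_of_le zero_lt_one hM) m]
    · push_neg at hJS
      obtain ⟨j₁, hj₁J, hj₁S⟩ := hJS
      have habs : |∏ j ∈ J, y j| ≤ η * M^m := by
        rw [Finset.abs_prod, ← Finset.mul_prod_erase _ _ hj₁J]
        have h1 : |y j₁| ≤ η := hz j₁ hj₁S
        have h2 : ∏ j ∈ J.erase j₁, |y j| ≤ M ^ m := by
          calc ∏ j ∈ J.erase j₁, |y j| ≤ ∏ _j ∈ J.erase j₁, M :=
                Finset.prod_le_prod (fun j _ => abs_nonneg _) (fun j _ => hyM j)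
            _ = M ^ (J.erase j₁).card := by rw [Finset.prod_const]
            _ ≤ M ^ m := pow_le_pow_right₀ hM
                (le_trans (Finset.card_le_card (Finset.erase_subset _ _))
                  (by rw [hJcard]; exact hlm))
        exact mul_le_mul h1 h2 (Finset.prod_nonneg fun j _ => abs_nonneg _) hη0
      have := neg_abs_le (∏ j ∈ J, y j)
      linarith
  -- the good term is at least δ^l
  have hgood : δ ^ l ≤ ∏ j ∈ J₀, y j := by
    calc δ ^ l = ∏ _j ∈ J₀, δ := by rw [Finset.prod_const, hJ₀card]
      _ ≤ ∏ j ∈ J₀, y j := Finset.prod_le_prod (fun j _ => le_of_lt hδ0)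
          (fun j hj => hw j (by simpa using hJ₀c hj))
  -- put it together
  have hsplit : esymm y l = (∏ j ∈ J₀, y j)
      + ∑ J ∈ ((Finset.univ : Finset (Fin m)).powersetCard l).erase J₀, ∏ j ∈ J, y j := by
    rw [esymm, ← Finset.add_sum_erase _ _ hJ₀]
  have hrest : -((2:ℝ)^m * (η * M^m)) ≤
      ∑ J ∈ ((Finset.univ : Finset (Fin m)).powersetCard l).erase J₀, ∏ j ∈ J, y j := by
    have hcard : ((((Finset.univ : Finset (Fin m)).powersetCard l).erase J₀).card : ℝ)
        ≤ (2:ℝ)^m := by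
      have h1 : (((Finset.univ : Finset (Fin m)).powersetCard l).erase J₀).card
          ≤ ((Finset.univ : Finset (Fin m)).powerset).card :=
        Finset.card_le_card (le_trans (Finset.erase_subset _ _)
          (fun J hJ => Finset.mem_powerset.mpr (Finset.mem_powersetCard.mp hJ).1))
      have h2 := Finset.card_powerset (Finset.univ : Finset (Fin m))
      calc ((((Finset.univ : Finset (Fin m)).powersetCard l).erase J₀).card : ℝ)
          ≤ (((Finset.univ : Finset (Fin m)).powerset).card : ℝ) := by exact_mod_cast h1
        _ = (2:ℝ)^m := by rw [h2]; push_cast; simp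
    calc -((2:ℝ)^m * (η * M^m))
        ≤ -(((((Finset.univ : Finset (Fin m)).powersetCard l).erase J₀).card : ℝ) * (η * M^m)) := by
          have hnn : (0:ℝ) ≤ η * M^m := by positivity
          nlinarith
      _ = ∑ _J ∈ ((Finset.univ : Finset (Fin m)).powersetCard l).erase J₀, -(η * M^m) := by
          rw [Finset.sum_const, nsmul_eq_mul]; ring
      _ ≤ ∑ J ∈ ((Finset.univ : Finset (Fin m)).powersetCard l).erase J₀, ∏ j ∈ J, y j :=
          Finset.sum_le_sum (fun J hJ => hlb J (Finset.mem_of_mem_erase hJ))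
  have hpow : δ ^ m ≤ δ ^ l := pow_le_pow_of_le_one (le_of_lt hδ0) hδ1 hlm
  rw [hsplit]
  nlinarith [hgood, hrest, hpow, hsmall]


lemma chain1 (B δm η η₂ Q σ₁ σ₂ : ℝ) (hB0 : 0 < B) (hδm : 0 < δm)
    (hη₂0 : 0 ≤ η₂) (hη₂η : η₂ ≤ η) (h4B : η * (4*B) ≤ δm)
    (hQ0 : 0 ≤ Q) (hQη : η₂^2 ≤ Q) (hsq : σ₁^2 = Q + 2*σ₂)
    (hσ₂δ : -(B*η₂^3) ≤ σ₂ * δm) : Q/2 ≤ σ₁^2 := by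
  have c1 : B*η₂ ≤ δm/4 := by nlinarith
  have c2 : B*η₂^3 ≤ (B*η₂)*Q := by
    nlinarith [mul_le_mul_of_nonneg_left hQη (mul_nonneg (le_of_lt hB0) hη₂0)]
  have c3 : (B*η₂)*Q ≤ (δm/4)*Q := mul_le_mul_of_nonneg_right c1 hQ0
  have c4 : (-(Q/4))*δm ≤ σ₂*δm := by nlinarith
  have c5 : -(Q/4) ≤ σ₂ := le_of_mul_le_mul_right (by linarith) hδm
  linarith

lemma chain2 (B δm η η₂ Q σ₁ W E₁ : ℝ) (hB0 : 0 < B) (hδm : 0 < δm)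
    (hη₂pos : 0 < η₂) (hη₂η : η₂ ≤ η) (h4B : η * (4*B) ≤ δm) (hWδ : δm ≤ W)
    (hA : σ₁*W + E₁ < 0) (hE1 : |E₁| ≤ B*η₂^2) (hQη : η₂^2 ≤ Q)
    (hQhalf : Q/2 ≤ σ₁^2) (hσ₁ : 0 ≤ σ₁) : False := by
  have h0 : σ₁*W < B*η₂^2 := by
    have := neg_abs_le E₁
    linarith
  have h1 : σ₁*δm ≤ σ₁*W := mul_le_mul_of_nonneg_left hWδ hσ₁
  have c1 : B*η₂ ≤ δm/4 := by nlinarith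
  have h2 : B*η₂^2 ≤ (η₂/4)*δm := by
    nlinarith [mul_le_mul_of_nonneg_right c1 (le_of_lt hη₂pos)]
  have h3 : σ₁ < η₂/4 := by
    have h4 : σ₁*δm < (η₂/4)*δm := by linarith
    exact lt_of_mul_lt_mul_right h4 (le_of_lt hδm)
  have h5 : σ₁^2 < (η₂/4)^2 := by
    nlinarith [mul_pos (sub_pos.2 h3) (show (0:ℝ) < η₂/4 + σ₁ by linarith)]
  nlinarith [mul_pos hη₂pos hη₂pos]

lemma chain3 (Q σ₁ : ℝ) (hQ0 : 0 ≤ Q) (hQhalf : Q/2 ≤ σ₁^2) (hσ₁ : σ₁ < 0) :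
    2/3*Real.sqrt Q ≤ -σ₁ := by
  have ht0 : 0 ≤ Real.sqrt Q := Real.sqrt_nonneg Q
  have ht2 : Real.sqrt Q ^ 2 = Q := Real.sq_sqrt hQ0
  by_contra hcon
  push_neg at hcon
  have h1' : (0:ℝ) < -σ₁ := by linarith
  have m1 : (-σ₁)*(-σ₁) < (2/3*Real.sqrt Q)*(-σ₁) := mul_lt_mul_of_pos_right hcon h1'
  have m2 : (2/3*Real.sqrt Q)*(-σ₁) < (2/3*Real.sqrt Q)*(2/3*Real.sqrt Q) :=
    mul_lt_mul_of_pos_left hcon (by linarith)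
  nlinarith

/-- The core combinatorial lemma. -/
lemma core {m d : ℕ} (hd : 2 ≤ d) (hdm : d ≤ m) (S : Finset (Fin m)) (hcard : S.card ≤ d)
    (y : Fin m → ℝ) (δ M η : ℝ) (hδ0 : 0 < δ) (hδ1 : δ ≤ 1) (hM : 1 ≤ M)
    (hw : ∀ j ∉ S, δ ≤ y j) (hyM : ∀ j, |y j| ≤ M) (hz : ∀ j ∈ S, |y j| ≤ η)
    (hη0 : 0 ≤ η) (hη1 : η ≤ 1)
    (hηA : η * (4 * (((m:ℝ)+1) * 4^m * M^m)) ≤ δ^m)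
    (hσ : ∀ l, m - d + 2 ≤ l → l ≤ m → 0 ≤ esymm y l) :
    (∀ j ∈ S, 0 ≤ y j) ∨
      (S.card = d ∧ 2/3 * Real.sqrt (∑ j ∈ S, (y j)^2) ≤ -∑ j ∈ S, y j) := by
  classical
  have hM0 : (0:ℝ) < M := lt_of_lt_of_le zero_lt_one hM
  have hMm : (0:ℝ) < M^m := pow_pos hM0 m
  have h4m : (0:ℝ) < 4^m := by positivity
  have h24 : (2:ℝ)^m ≤ 4^m := pow_le_pow_left₀ (by norm_num) (by norm_num) m
  have hsmall : (2:ℝ)^m * η * M^m ≤ δ^m := by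
    have h1 : (2:ℝ)^m * η * M^m = η * ((2:ℝ)^m * M^m) := by ring
    have h2 : η * ((2:ℝ)^m * M^m) ≤ η * (4 * (((m:ℝ)+1) * 4^m * M^m)) := by
      apply mul_le_mul_of_nonneg_left _ hη0
      have hm0 : (0:ℝ) ≤ (m:ℝ) := Nat.cast_nonneg m
      have hp : (0:ℝ) < 4^m * M^m := mul_pos h4m hMm
      nlinarith [mul_le_mul_of_nonneg_right h24 (le_of_lt hMm)]
    linarith
  by_cases hsd : S.card = d
  · -- |S| = d
    by_cases hcstar : 0 ≤ esymm y (m - d + 1)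
    · -- all coefficients nonneg : conclude everything nonneg
      left
      intro j _
      refine all_nonneg_of_esymm_nonneg y (fun l hl => ?_) j
      rcases Nat.lt_or_ge l (m - d + 1) with h | h
      · exact esymm_low_nonneg S y δ M η hδ0 hδ1 hM hw hyM hz hη0 hsmall
          (by omega)
      · rcases Nat.eq_or_lt_of_le h with h' | h'
        · rw [← h']; exact hcstar
        · exact hσ l (by omega) hl
    · -- the interesting case
      push_neg at hcstar
      right
      refine ⟨hsd, ?_⟩
      have hSne : S.Nonempty := Finset.card_pos.mp (by omega)
      set η₂ := S.sup' hSne (fun j => |y j|) with hη₂def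
      obtain ⟨j₁, hj₁S, hη₂eq'⟩ := S.exists_mem_eq_sup' hSne (fun j => |y j|)
      have hη₂eq : η₂ = |y j₁| := by rw [hη₂def]; exact hη₂eq'
      have hη₂0 : 0 ≤ η₂ := by rw [hη₂eq]; exact abs_nonneg _
      have hη₂η : η₂ ≤ η := by rw [hη₂eq]; exact hz j₁ hj₁S
      have hη₂1 : η₂ ≤ 1 := le_trans hη₂η hη1
      have hz₂ : ∀ j ∈ S, |y j| ≤ η₂ := fun j hj => by rw [hη₂def]; exact Finset.le_sup' (fun j => |y j|) hj
      by_cases hη₂z : η₂ = 0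
      · have hy0 : ∀ j ∈ S, y j = 0 := fun j hj =>
          abs_eq_zero.mp (le_antisymm (hη₂z ▸ hz₂ j hj) (abs_nonneg _))
        rw [Finset.sum_eq_zero hy0, Finset.sum_eq_zero (fun j hj => by rw [hy0 j hj]; ring)]
        simp
      have hη₂pos : 0 < η₂ := lt_of_le_of_ne hη₂0 (Ne.symm hη₂z)
      -- polynomial setup
      set gS : Polynomial ℝ := ∏ j ∈ S, (X + C (y j)) with hgSdef
      set gW : Polynomial ℝ := ∏ j ∈ Sᶜ, (X + C (y j)) with hgWdef
      have hprod : gS * gW = ∏ j : Fin m, (X + C (y j)) :=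
        Finset.prod_mul_prod_compl S _
      have hWcard : Sᶜ.card = m - d := by rw [Finset.card_compl]; simp [hsd]
      have hgS : ∀ k, k ≤ d → gS.coeff k = ∑ J ∈ S.powersetCard (d - k), ∏ j ∈ J, y j := by
        intro k hk
        rw [hgSdef, Finset.prod_X_add_C_coeff _ _ (by rw [hsd]; exact hk), hsd]
      have hgW : ∀ k, k ≤ m - d →
          gW.coeff k = ∑ J ∈ Sᶜ.powersetCard (m - d - k), ∏ j ∈ J, y j := by
        intro k hk
        rw [hgWdef, Finset.prod_X_add_C_coeff _ _ (by rw [hWcard]; exact hk), hWcard]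
      set W : ℝ := ∏ j ∈ Sᶜ, y j with hWdef
      have hgW0 : gW.coeff 0 = W := by
        rw [hgW 0 (Nat.zero_le _), Nat.sub_zero, ← hWcard, Finset.powersetCard_self,
          Finset.sum_singleton]
      have hgS1 : gS.coeff (d-1) = ∑ j ∈ S, y j := by
        rw [hgS (d-1) (Nat.sub_le _ _), show d - (d-1) = 1 by omega,
          Finset.powersetCard_one, Finset.sum_map]
        simp
      have hgS2 : gS.coeff (d-2) = ∑ J ∈ S.powersetCard 2, ∏ j ∈ J, y j := by
        rw [hgS (d-2) (Nat.sub_le _ _), show d - (d-2) = 2 by omega]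
      have hWδ : δ^m ≤ W := by
        have h1 : δ ^ (m - d) ≤ W := by
          rw [hWdef]
          calc δ ^ (m-d) = ∏ _j ∈ Sᶜ, δ := by rw [Finset.prod_const, hWcard]
            _ ≤ ∏ j ∈ Sᶜ, y j := Finset.prod_le_prod (fun j _ => le_of_lt hδ0)
                (fun j hj => hw j (Finset.mem_compl.mp hj))
        exact le_trans (pow_le_pow_of_le_one (le_of_lt hδ0) hδ1 (Nat.sub_le _ _)) h1
      have hW0 : 0 < W := lt_of_lt_of_le (pow_pos hδ0 m) hWδ
      -- coefficient bounds
      have hgWbound : ∀ k : ℕ, |gW.coeff k| ≤ 2^m * M^m := by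
        intro k
        rcases le_or_gt k (m - d) with hk | hk
        · rw [hgW k hk]
          refine le_trans (abs_esymm_sum_le Sᶜ y (le_of_lt hM0) (fun j _ => hyM j) _) ?_
          exact mul_le_mul_of_nonneg_left
            (pow_le_pow_right₀ hM (Nat.sub_le _ _ |>.trans (Nat.sub_le _ _))) (by positivity)
        · have : gW.coeff k = 0 := Polynomial.coeff_eq_zero_of_natDegree_lt
              (lt_of_le_of_lt (le_trans (natDegree_prod_X_add_C_le y Sᶜ) (le_of_eq hWcard)) hk)
          rw [this, abs_zero]; positivity
      set B : ℝ := ((m:ℝ)+1) * 4^m * M^m with hBdef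
      have hB0 : 0 < B := by positivity
      have h4B : η * (4 * B) ≤ δ^m := hηA
      have h2eq : (2:ℝ)^m * (2:ℝ)^m = 4^m := by rw [← mul_pow]; norm_num
      -- splitting of esymm at level l via coefficient of product at m - l
      have hes : ∀ l, l ≤ m → esymm y l =
          ∑ p ∈ Finset.HasAntidiagonal.antidiagonal (m - l), gS.coeff p.1 * gW.coeff p.2 := by
        intro l hl
        have h1 : esymm y l = (∏ j : Fin m, (X + C (y j))).coeff (m - l) := by
          rw [coeff_prod_eq_esymm y (Nat.sub_le _ _), show m - (m - l) = l by omega]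
        rw [h1, ← hprod, Polynomial.coeff_mul]
      -- generic error bound
      have herr : ∀ k : ℕ, k ≤ d - 1 →
          |∑ p ∈ (Finset.HasAntidiagonal.antidiagonal k).erase (k, 0), gS.coeff p.1 * gW.coeff p.2|
            ≤ B * η₂^(d - k + 1) := by
        intro k hkd
        rcases Nat.eq_zero_or_pos k with rfl | hk1
        · rw [show Finset.HasAntidiagonal.antidiagonal 0 = {((0:ℕ),(0:ℕ))} from rfl, Finset.erase_singleton,
            Finset.sum_empty, abs_zero]
          positivity
        refine le_trans (Finset.abs_sum_le_sum_abs _ _) ?_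
        have hterm : ∀ p ∈ (Finset.HasAntidiagonal.antidiagonal k).erase (k, 0),
            |gS.coeff p.1 * gW.coeff p.2| ≤ 4^m * M^m * η₂^(d - k + 1) := by
          intro p hp
          have hpmem := Finset.mem_of_mem_erase hp
          have hpsum : p.1 + p.2 = k := Finset.HasAntidiagonal.mem_antidiagonal.mp hpmem
          have hpne : p ≠ (k, 0) := Finset.ne_of_mem_erase hp
          have hp1 : p.1 ≤ k - 1 := by
            rcases Nat.lt_or_ge p.1 k with h | h
            · omega
            · exfalso
              apply hpne
              have h1 : p.1 = k := by omega
              have h2 : p.2 = 0 := by omega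
              exact Prod.ext h1 h2
          have hexp : d - k + 1 ≤ d - p.1 := by omega
          have hb1 : |gS.coeff p.1| ≤ 2^m * η₂^(d - p.1) := by
            rw [hgS p.1 (by omega)]
            exact abs_esymm_sum_le S y hη₂0 hz₂ _
          have hb1' : |gS.coeff p.1| ≤ 2^m * η₂^(d - k + 1) := by
            refine le_trans hb1 (mul_le_mul_of_nonneg_left ?_ (by positivity))
            exact pow_le_pow_of_le_one hη₂0 hη₂1 hexp
          have hb2 : |gW.coeff p.2| ≤ 2^m * M^m := hgWbound p.2
          calc |gS.coeff p.1 * gW.coeff p.2| = |gS.coeff p.1| * |gW.coeff p.2| := abs_mul _ _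
            _ ≤ (2^m * η₂^(d - k + 1)) * (2^m * M^m) :=
                mul_le_mul hb1' hb2 (abs_nonneg _) (by positivity)
            _ = 4^m * M^m * η₂^(d - k + 1) := by rw [← h2eq]; ring
        refine le_trans (Finset.sum_le_sum hterm) ?_
        rw [Finset.sum_const, nsmul_eq_mul]
        have hcard2 : (((Finset.HasAntidiagonal.antidiagonal k).erase (k, 0)).card : ℝ) ≤ (m:ℝ) + 1 := by
          have h1 : ((Finset.HasAntidiagonal.antidiagonal k).erase (k, 0)).card ≤ (Finset.HasAntidiagonal.antidiagonal k).card :=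
            Finset.card_le_card (Finset.erase_subset _ _)
          have h2 : (Finset.HasAntidiagonal.antidiagonal k).card = k + 1 := Finset.Nat.card_antidiagonal k
          have h3 : k + 1 ≤ m + 1 := by omega
          calc (((Finset.HasAntidiagonal.antidiagonal k).erase (k, 0)).card : ℝ) ≤ ((k+1 : ℕ) : ℝ) := by
                exact_mod_cast le_trans h1 (le_of_eq h2)
            _ ≤ ((m+1 : ℕ) : ℝ) := by exact_mod_cast h3
            _ = (m:ℝ) + 1 := by push_cast; ring
        calc (((Finset.HasAntidiagonal.antidiagonal k).erase (k, 0)).card : ℝ) * (4^m * M^m * η₂^(d - k + 1))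
            ≤ ((m:ℝ) + 1) * (4^m * M^m * η₂^(d - k + 1)) :=
              mul_le_mul_of_nonneg_right hcard2 (by positivity)
          _ = B * η₂^(d - k + 1) := by rw [hBdef]; ring
      -- the two splittings
      set σ₁ : ℝ := ∑ j ∈ S, y j with hσ₁def
      set σ₂ : ℝ := ∑ J ∈ S.powersetCard 2, ∏ j ∈ J, y j with hσ₂def
      set E₁ : ℝ := ∑ p ∈ (Finset.HasAntidiagonal.antidiagonal (d-1)).erase (d-1, 0),
        gS.coeff p.1 * gW.coeff p.2 with hE₁def
      set E₂ : ℝ := ∑ p ∈ (Finset.HasAntidiagonal.antidiagonal (d-2)).erase (d-2, 0),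
        gS.coeff p.1 * gW.coeff p.2 with hE₂def
      have he1 : esymm y (m-d+1) = σ₁ * W + E₁ := by
        rw [hes (m-d+1) (by omega), show m - (m-d+1) = d - 1 by omega,
          ← Finset.add_sum_erase _ _ (show ((d-1,0) : ℕ × ℕ) ∈ Finset.HasAntidiagonal.antidiagonal (d-1) by
            simp), hgS1, hgW0, hE₁def, hσ₁def]
      have he2 : esymm y (m-d+2) = σ₂ * W + E₂ := by
        rw [hes (m-d+2) (by omega), show m - (m-d+2) = d - 2 by omega,
          ← Finset.add_sum_erase _ _ (show ((d-2,0) : ℕ × ℕ) ∈ Finset.HasAntidiagonal.antidiagonal (d-2) by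
            simp), hgS2, hgW0, hE₂def, hσ₂def]
      have hE1 : |E₁| ≤ B * η₂^2 := by
        have := herr (d-1) le_rfl
        rwa [show d - (d-1) + 1 = 2 by omega] at this
      have hE2 : |E₂| ≤ B * η₂^3 := by
        have := herr (d-2) (by omega)
        rwa [show d - (d-2) + 1 = 3 by omega] at this
      have hA : σ₁ * W + E₁ < 0 := he1 ▸ hcstar
      have hB2 : 0 ≤ σ₂ * W + E₂ := he2 ▸ hσ (m-d+2) le_rfl (by omega)
      -- quantitative analysis
      set Q : ℝ := ∑ j ∈ S, (y j)^2 with hQdef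
      have hQ0 : 0 ≤ Q := Finset.sum_nonneg fun j _ => sq_nonneg _
      have hQη : η₂^2 ≤ Q := by
        have h1 : (y j₁)^2 ≤ Q := Finset.single_le_sum (fun j _ => sq_nonneg (y j)) hj₁S
        have h2 : η₂^2 = (y j₁)^2 := by rw [hη₂eq, sq_abs]
        linarith
      have hsq : σ₁^2 = Q + 2*σ₂ := sq_sum_eq S y
      have hδm : (0:ℝ) < δ^m := pow_pos hδ0 m
      have hσ₂δ : -(B*η₂^3) ≤ σ₂ * δ^m := by
        have h1 : -(B*η₂^3) ≤ σ₂ * W := by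
          have := le_abs_self E₂
          linarith
        rcases le_or_gt 0 σ₂ with h | h
        · have h2 : 0 ≤ σ₂ * δ^m := mul_nonneg h (le_of_lt hδm)
          have h3 : 0 ≤ B*η₂^3 := mul_nonneg (le_of_lt hB0) (pow_nonneg hη₂0 3)
          linarith
        · have h2 : σ₂ * W ≤ σ₂ * δ^m := mul_le_mul_of_nonpos_left hWδ (le_of_lt h)
          linarith
      have hQhalf : Q / 2 ≤ σ₁^2 :=
        chain1 B (δ^m) η η₂ Q σ₁ σ₂ hB0 hδm hη₂0 hη₂η h4B hQ0 hQη hsq hσ₂δ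
      rcases le_or_gt 0 σ₁ with hσ₁ | hσ₁
      · exact (chain2 B (δ^m) η η₂ Q σ₁ W E₁ hB0 hδm hη₂pos hη₂η h4B hWδ
          hA hE1 hQη hQhalf hσ₁).elim
      · exact chain3 Q σ₁ hQ0 hQhalf hσ₁
  · -- |S| < d : all esymm conditions available
    left
    intro j _
    refine all_nonneg_of_esymm_nonneg y (fun l hl => ?_) j
    rcases le_or_gt l (m - S.card) with h | h
    · exact esymm_low_nonneg S y δ M η hδ0 hδ1 hM hw hyM hz hη0 hsmall h
    · exact hσ l (by omega) hl

section Geometry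

namespace FacetRep

variable {d m : ℕ}

lemma mem_P_iff (R : FacetRep d m) (x : E d) : x ∈ R.P ↔ ∀ j, 0 ≤ R.q x j := by
  conv_lhs => rw [R.rep]
  exact Iff.rfl

lemma q_cont (R : FacetRep d m) (j : Fin m) : Continuous fun x => R.q x j := by
  unfold q qf
  exact (continuous_const.sub (Continuous.inner continuous_const continuous_id)).div_const _

lemma diam_pos (R : FacetRep d m) (hd : 1 ≤ d) : 0 < Metric.diam R.P := by
  obtain ⟨c, hc⟩ := R.fulldim
  obtain ⟨r, hr, hball⟩ := Metric.isOpen_iff.mp isOpen_interior c hc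
  set v : E d := EuclideanSpace.single (⟨0, hd⟩ : Fin d) (r/2) with hv
  have hvn : ‖v‖ = r/2 := by
    rw [hv, EuclideanSpace.norm_single, Real.norm_eq_abs, abs_of_pos (by linarith)]
  have hmem : c + v ∈ R.P := interior_subset (hball (by
    rw [Metric.mem_ball, dist_eq_norm, add_sub_cancel_left, hvn]; linarith))
  have hcP : c ∈ R.P := interior_subset (hball (Metric.mem_ball_self hr))
  have hd2 := Metric.dist_le_diam_of_mem R.compact.isBounded hmem hcP
  rw [dist_eq_norm, add_sub_cancel_left, hvn] at hd2
  linarith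

lemma q_combo (R : FacetRep d m) {a b : ℝ} (hab : a + b = 1) (x y : E d) (j : Fin m) :
    R.q (a • x + b • y) j = a * R.q x j + b * R.q y j := by
  unfold q qf
  rw [inner_add_right, real_inner_smul_right, real_inner_smul_right]
  have h1 : supp R.P (R.u j) - (a * ⟪R.u j, x⟫ + b * ⟪R.u j, y⟫)
      = a * (supp R.P (R.u j) - ⟪R.u j, x⟫) + b * (supp R.P (R.u j) - ⟪R.u j, y⟫) := by
    linear_combination (supp R.P (R.u j)) * hab.symm
  rw [h1]
  ring

lemma q_sub (R : FacetRep d m) (x z : E d) (j : Fin m) :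
    R.q x j - R.q z j = ⟪R.u j, z - x⟫ / Metric.diam R.P := by
  unfold q qf
  rw [div_sub_div_same, inner_sub_right]
  ring_nf

lemma q_le_one (R : FacetRep d m) (hD : 0 < Metric.diam R.P) {p : E d} (hp : p ∈ R.P)
    (j : Fin m) : R.q p j ≤ 1 := by
  have hPne : R.P.Nonempty := ⟨p, hp⟩
  have hub : supp R.P (R.u j) ≤ ⟪R.u j, p⟫ + Metric.diam R.P := by
    apply csSup_le (hPne.image _)
    rintro t ⟨x', hx', rfl⟩
    have h1 : ⟪R.u j, x'⟫ - ⟪R.u j, p⟫ = ⟪R.u j, x' - p⟫ := (inner_sub_right _ _ _).symm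
    have h2 : ⟪R.u j, x' - p⟫ ≤ ‖R.u j‖ * ‖x' - p‖ := real_inner_le_norm _ _
    have h5 : ‖R.u j‖ = 1 := (R.facet j).1
    have h4 : dist x' p ≤ Metric.diam R.P :=
      Metric.dist_le_diam_of_mem R.compact.isBounded hx' hp
    rw [dist_eq_norm] at h4
    rw [h5, one_mul] at h2
    linarith [h1 ▸ h2]
  unfold q qf
  rw [div_le_one hD]
  linarith

lemma q_center (R : FacetRep d m) {c : E d} {r : ℝ} (hr : 0 < r) (hball : Metric.ball c r ⊆ R.P)
    (hD : 0 < Metric.diam R.P) (j : Fin m) : r / (2 * Metric.diam R.P) ≤ R.q c j := by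
  have hu : ‖R.u j‖ = 1 := (R.facet j).1
  have hmem : c + (r/2) • R.u j ∈ R.P := hball (by
    rw [Metric.mem_ball, dist_eq_norm, add_sub_cancel_left, norm_smul, hu, mul_one,
      Real.norm_eq_abs, abs_of_pos (by linarith)]
    linarith)
  have h0 : 0 ≤ R.q (c + (r/2) • R.u j) j := (R.mem_P_iff _).mp hmem j
  have hq : R.q (c + (r/2) • R.u j) j = R.q c j - (r/2) / Metric.diam R.P := by
    unfold q qf
    rw [inner_add_right, real_inner_smul_right, real_inner_self_eq_norm_sq, hu]
    ring
  rw [hq] at h0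
  have h1 : (r/2) / Metric.diam R.P = r / (2 * Metric.diam R.P) := by ring
  linarith

lemma Peps_subset_closedBall (R : FacetRep d m) {c : E d} {ρ : ℝ} (hc : c ∈ R.P)
    (hρ0 : 0 < ρ) (hρ : ∀ j, ρ ≤ R.q c j) {ε : ℝ} (hε : 0 < ε) :
    R.Peps ε ⊆ Metric.closedBall c (Metric.diam R.P * (ρ + ε) / ρ) := by
  intro x hx
  set l := ρ / (ρ + ε) with hl
  have hρε : 0 < ρ + ε := by linarith
  have hl0 : 0 < l := div_pos hρ0 hρε
  have hl1 : l ≤ 1 := by rw [hl, div_le_one hρε]; linarith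
  set ybar := l • x + (1 - l) • c with hy
  have hyP : ybar ∈ R.P := by
    rw [R.mem_P_iff]
    intro j
    rw [hy, R.q_combo (by ring : l + (1 - l) = 1)]
    have h1 : -ε ≤ R.q x j := hx j
    have h2 : ρ ≤ R.q c j := hρ j
    have key : l * (-ε) + (1 - l) * ρ = 0 := by
      rw [hl]; field_simp; ring
    nlinarith
  have hdist : dist ybar c ≤ Metric.diam R.P :=
    Metric.dist_le_diam_of_mem R.compact.isBounded hyP hc
  have hsub : ybar - c = l • (x - c) := by rw [hy]; module
  rw [dist_eq_norm, hsub, norm_smul, Real.norm_eq_abs, abs_of_pos hl0] at hdist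
  rw [Metric.mem_closedBall, dist_eq_norm]
  have h2 : ‖x - c‖ ≤ Metric.diam R.P / l := by
    rw [le_div_iff₀ hl0, mul_comm]
    exact hdist
  have h3 : Metric.diam R.P / l = Metric.diam R.P * (ρ + ε) / ρ := by
    rw [hl]
    field_simp
  linarith

lemma Peps_isClosed (R : FacetRep d m) (ε : ℝ) : IsClosed (R.Peps ε) := by
  have h : R.Peps ε = ⋂ j, {x | -ε ≤ R.q x j} := by
    ext x
    simp [Peps, Set.mem_iInter]
  rw [h]
  exact isClosed_iInter fun j => isClosed_le continuous_const (R.q_cont j)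

lemma exists_vertex (R : FacetRep d m) (S : Finset (Fin m)) {x₀ : E d} (hx₀ : x₀ ∈ R.P)
    (hS : ∀ j ∈ S, R.q x₀ j = 0) :
    ∃ v ∈ vertices R.P, ∀ j ∈ S, R.q v j = 0 := by
  classical
  set F : Set (E d) := R.P ∩ ⋂ j ∈ S, {x | R.q x j = 0} with hF
  have hFsub : F ⊆ R.P := Set.inter_subset_left
  have hFx : x₀ ∈ F := ⟨hx₀, Set.mem_iInter₂.mpr hS⟩
  have hFclosed : IsClosed F := IsClosed.inter R.compact.isClosed
    (isClosed_biInter fun j _ => isClosed_eq (R.q_cont j) continuous_const)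
  have hFcomp : IsCompact F := R.compact.of_isClosed_subset hFclosed hFsub
  have hext : IsExtreme ℝ R.P F := by
    constructor
    · exact hFsub
    · rintro x hx y hy z hzF hz
      obtain ⟨a, b, ha, hb, hab, rfl⟩ := hz
      have hq : ∀ j ∈ S, R.q x j = 0 ∧ R.q y j = 0 := by
        intro j hj
        have h0 : R.q (a • x + b • y) j = 0 := Set.mem_iInter₂.mp hzF.2 j hj
        rw [R.q_combo hab] at h0
        have h1 : 0 ≤ R.q x j := (R.mem_P_iff _).mp hx j
        have h2 : 0 ≤ R.q y j := (R.mem_P_iff _).mp hy j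
        constructor <;> nlinarith
      exact ⟨hx, Set.mem_iInter₂.mpr fun j hj => (hq j hj).1⟩
  obtain ⟨v, hv⟩ := hFcomp.extremePoints_nonempty ⟨x₀, hFx⟩
  refine ⟨v, hext.extremePoints_subset_extremePoints hv, ?_⟩
  exact fun j hj => Set.mem_iInter₂.mp (hv.1 : v ∈ F).2 j hj

end FacetRep

end Geometry

open Topology

theorem statement6 (d m : ℕ) (hd : 2 ≤ d) (R : FacetRep d m) (hs : R.Simple) :
    ∃ ε₃ > (0 : ℝ),
      {x ∈ R.Peps ε₃ | ∀ i, m - d + 2 ≤ i → i ≤ m → 0 ≤ esymm (R.q x) i}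
        ⊆ R.P ∪ ⋃ v ∈ vertices R.P, R.Cv v := by
  classical
  -- interior ball and basic constants
  obtain ⟨c₀, hc₀⟩ := R.fulldim
  obtain ⟨r, hr, hball'⟩ := Metric.isOpen_iff.mp isOpen_interior c₀ hc₀
  have hball : Metric.ball c₀ r ⊆ R.P := hball'.trans interior_subset
  have hcP : c₀ ∈ R.P := hball (Metric.mem_ball_self hr)
  have hD : 0 < Metric.diam R.P := R.diam_pos (by omega)
  set ρ : ℝ := r / (2 * Metric.diam R.P) with hρdef
  have hρ0 : 0 < ρ := by rw [hρdef]; positivity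
  have hρ : ∀ j, ρ ≤ R.q c₀ j := fun j => R.q_center hr hball hD j
  -- the compact set `Peps 1`
  have hPepsBall := R.Peps_subset_closedBall hcP hρ0 hρ one_pos
  set Rad : ℝ := Metric.diam R.P * (ρ + 1) / ρ with hRaddef
  have hRad0 : 0 < Rad := by rw [hRaddef]; positivity
  have hK : IsCompact (R.Peps 1) :=
    Metric.isCompact_of_isClosed_isBounded (R.Peps_isClosed 1)
      (Metric.isBounded_closedBall.subset hPepsBall)
  -- uniform bound on |q| over `Peps 1`
  set M : ℝ := 1 + Rad / Metric.diam R.P with hMdef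
  have hM1 : 1 ≤ M := by
    rw [hMdef]
    have : 0 < Rad / Metric.diam R.P := by positivity
    linarith
  have hMq : ∀ x ∈ R.Peps 1, ∀ j, |R.q x j| ≤ M := by
    intro x hx j
    have h1 : -1 ≤ R.q x j := hx j
    have hqs := R.q_sub x c₀ j
    have hb : ⟪R.u j, c₀ - x⟫ ≤ ‖c₀ - x‖ := by
      have h2 := real_inner_le_norm (R.u j) (c₀ - x)
      rwa [(R.facet j).1, one_mul] at h2
    have hxc : ‖c₀ - x‖ ≤ Rad := by
      have h3 := hPepsBall hx
      rw [Metric.mem_closedBall] at h3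
      calc ‖c₀ - x‖ = dist c₀ x := (dist_eq_norm _ _).symm
        _ = dist x c₀ := dist_comm _ _
        _ ≤ Rad := h3
    have h4 : R.q x j - R.q c₀ j ≤ Rad / Metric.diam R.P := by
      rw [hqs]
      exact (div_le_div_iff_of_pos_right hD).mpr (hb.trans hxc)
    have h5 : R.q c₀ j ≤ 1 := R.q_le_one hD hcP j
    have h6 : 0 ≤ Rad / Metric.diam R.P := by positivity
    rw [abs_le, hMdef]
    constructor <;> linarith
  -- contradiction setup
  by_contra hcon
  push_neg at hcon
  have hseq : ∀ n : ℕ, ∃ x : E d,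
      (x ∈ R.Peps (min 1 (1/((n:ℝ)+1))) ∧
        (∀ i, m - d + 2 ≤ i → i ≤ m → 0 ≤ esymm (R.q x) i)) ∧
      x ∉ R.P ∪ ⋃ v ∈ vertices R.P, R.Cv v := by
    intro n
    have hpos : (0:ℝ) < min 1 (1/((n:ℝ)+1)) := lt_min one_pos (by positivity)
    obtain ⟨x, hx1, hx2⟩ := Set.not_subset.mp (hcon _ hpos)
    exact ⟨x, ⟨hx1.1, hx1.2⟩, hx2⟩
  choose xs hxs1 hxs2 using hseq
  have hxsK : ∀ n, xs n ∈ R.Peps 1 := by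
    intro n j
    have h1 := (hxs1 n).1 j
    have h2 : min 1 (1/((n:ℝ)+1)) ≤ 1 := min_le_left _ _
    have : -(1:ℝ) ≤ -min 1 (1/((n:ℝ)+1)) := by linarith
    linarith
  obtain ⟨xstar, hxstarK, φ, hφmono, hφlim⟩ := hK.tendsto_subseq hxsK
  have hq_lim : ∀ j, Filter.Tendsto (fun n => R.q (xs (φ n)) j)
      Filter.atTop (𝓝 (R.q xstar j)) :=
    fun j => ((R.q_cont j).continuousAt).tendsto.comp hφlim
  have hφtop : Filter.Tendsto φ Filter.atTop Filter.atTop := hφmono.tendsto_atTop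
  have hε_lim : Filter.Tendsto (fun n => min 1 (1/((φ n:ℝ)+1))) Filter.atTop (𝓝 0) := by
    have h1 : Filter.Tendsto (fun n : ℕ => 1/((n:ℝ)+1)) Filter.atTop (𝓝 0) :=
      tendsto_one_div_add_atTop_nhds_zero_nat
    have h2 : Filter.Tendsto (fun n => 1/((φ n:ℝ)+1)) Filter.atTop (𝓝 0) := h1.comp hφtop
    refine squeeze_zero (fun n => le_min zero_le_one (by positivity)) (fun n => min_le_right _ _) h2
  have hxstarP : xstar ∈ R.P := by
    rw [R.mem_P_iff]
    intro j
    have hneg : Filter.Tendsto (fun n => -min 1 (1/((φ n:ℝ)+1))) Filter.atTop (𝓝 0) := by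
      have := hε_lim.neg
      rwa [neg_zero] at this
    exact le_of_tendsto_of_tendsto' hneg (hq_lim j) (fun n => (hxs1 (φ n)).1 j)
  -- the active set at the limit point and the gap δ
  set S : Finset (Fin m) := R.act xstar with hSdef
  have hSq : ∀ j ∈ S, R.q xstar j = 0 := fun j hj => by
    have := Finset.mem_filter.mp hj
    exact this.2
  have hSq' : ∀ j ∉ S, 0 < R.q xstar j := by
    intro j hj
    refine lt_of_le_of_ne ((R.mem_P_iff _).mp hxstarP j) ?_
    intro h
    exact hj (Finset.mem_filter.mpr ⟨Finset.mem_univ j, h.symm⟩)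
  obtain ⟨δ, hδ0, hδ1, hδS⟩ : ∃ δ : ℝ, 0 < δ ∧ δ ≤ 1 ∧ ∀ j ∉ S, 2*δ ≤ R.q xstar j := by
    by_cases hT : (Sᶜ : Finset (Fin m)).Nonempty
    · refine ⟨min ((Sᶜ.inf' hT fun j => R.q xstar j)/2) (1/2), ?_, ?_, ?_⟩
      · refine lt_min ?_ (by norm_num)
        have : ∀ j ∈ Sᶜ, 0 < R.q xstar j := fun j hj => hSq' j (Finset.mem_compl.mp hj)
        have h1 : 0 < Sᶜ.inf' hT fun j => R.q xstar j := by
          rw [Finset.lt_inf'_iff]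
          exact this
        linarith
      · calc min ((Sᶜ.inf' hT fun j => R.q xstar j)/2) (1/2) ≤ 1/2 := min_le_right _ _
          _ ≤ 1 := by norm_num
      · intro j hj
        have h1 : (Sᶜ.inf' hT fun j => R.q xstar j) ≤ R.q xstar j :=
          Finset.inf'_le _ (Finset.mem_compl.mpr hj)
        have h2 : min ((Sᶜ.inf' hT fun j => R.q xstar j)/2) (1/2)
            ≤ (Sᶜ.inf' hT fun j => R.q xstar j)/2 := min_le_left _ _
        linarith
    · refine ⟨1/2, by norm_num, by norm_num, fun j hj => absurd ⟨j, Finset.mem_compl.mpr hj⟩ hT⟩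
  -- a vertex containing all active facets
  obtain ⟨v, hvert, hvq⟩ := R.exists_vertex S hxstarP hSq
  have hSsub : S ⊆ R.act v := fun j hj =>
    Finset.mem_filter.mpr ⟨Finset.mem_univ _, hvq j hj⟩
  have hcardv : (R.act v).card = d := hs v hvert
  have hcardS : S.card ≤ d := le_trans (Finset.card_le_card hSsub) (le_of_eq hcardv)
  have hdm : d ≤ m := by
    calc d = (R.act v).card := hcardv.symm
      _ ≤ (Finset.univ : Finset (Fin m)).card := Finset.card_le_card (Finset.subset_univ _)
      _ = m := by simp
  -- the smallness threshold
  set Bc : ℝ := 4 * (((m:ℝ)+1) * 4^m * M^m) with hBcdef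
  have hBc0 : 0 < Bc := by
    rw [hBcdef]
    have : (0:ℝ) < M := lt_of_lt_of_le zero_lt_one hM1
    positivity
  set η₀ : ℝ := min 1 (δ^m / Bc) with hη₀def
  have hη₀0 : 0 < η₀ := lt_min one_pos (by positivity)
  have hη₀1 : η₀ ≤ 1 := min_le_left _ _
  have hη₀A : η₀ * Bc ≤ δ^m := by
    have h1 : η₀ ≤ δ^m / Bc := min_le_right _ _
    calc η₀ * Bc ≤ (δ^m / Bc) * Bc := mul_le_mul_of_nonneg_right h1 (le_of_lt hBc0)
      _ = δ^m := by field_simp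
  -- eventual closeness
  have hev : ∀ᶠ n in Filter.atTop, ∀ j : Fin m,
      (j ∈ S → |R.q (xs (φ n)) j| ≤ η₀) ∧ (j ∉ S → δ ≤ R.q (xs (φ n)) j) := by
    rw [Filter.eventually_all]
    intro j
    by_cases hj : j ∈ S
    · have h0 : R.q xstar j = 0 := hSq j hj
      have h1 := Metric.tendsto_nhds.mp (hq_lim j) η₀ hη₀0
      filter_upwards [h1] with n hn
      refine ⟨fun _ => ?_, fun hj' => absurd hj hj'⟩
      rw [Real.dist_eq, h0, sub_zero] at hn
      exact le_of_lt hn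
    · have h1 := Metric.tendsto_nhds.mp (hq_lim j) δ hδ0
      have h2 : 2*δ ≤ R.q xstar j := hδS j hj
      filter_upwards [h1] with n hn
      refine ⟨fun hj' => absurd hj' hj, fun _ => ?_⟩
      rw [Real.dist_eq, abs_lt] at hn
      linarith
  obtain ⟨n, hn⟩ := hev.exists
  -- apply the core lemma
  have hcore := core hd hdm S hcardS (R.q (xs (φ n))) δ M η₀ hδ0 hδ1 hM1
    (fun j hj => (hn j).2 hj) (fun j => hMq _ (hxsK (φ n)) j)
    (fun j hj => (hn j).1 hj) (le_of_lt hη₀0) hη₀1 hη₀A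
    ((hxs1 (φ n)).2)
  rcases hcore with hpos | ⟨hcardd, hcone⟩
  · refine hxs2 (φ n) (Set.mem_union_left _ ?_)
    rw [R.mem_P_iff]
    intro j
    by_cases hj : j ∈ S
    · exact hpos j hj
    · exact le_trans (le_of_lt hδ0) ((hn j).2 hj)
  · have hSeq : S = R.act v :=
      Finset.eq_of_subset_of_card_le hSsub (by rw [hcardv, hcardd])
    refine hxs2 (φ n) (Set.mem_union_right _ ?_)
    refine Set.mem_biUnion hvert ?_
    show (2/3) * Real.sqrt (∑ j ∈ R.act v, (R.q (xs (φ n)) j)^2)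
        ≤ -(∑ j ∈ R.act v, R.q (xs (φ n)) j)
    rw [← hSeq]
    exact hcone

end AverkovHenk
end
end
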